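/- arXiv:2406.15892 — 9 statements merged into one kernel-verified Lean document; each statement's English description precedes it below -/
import Mathlib

section
/- Let ε = (ε_n) be a sequence in (0,1] and let A^ε = {(x_n) ∈ ℂ^ℕ : sup_n |x_n|^{ε_n} < ∞} with norm ‖(x_n)‖ = sup_n |x_n|^{ε_n}. Then an element x = (x_n) ∈ A^ε is a unit if and only if there exists M > 1 such that 1/M ≤ |x_n|^{ε_n} ≤ M for all n. -/
/-- In the product Banach ring A^ε = {(x_n) ∈ ℂ^ℕ : sup_n |x_n|^{ε_n} < ∞}, an element
x is a unit (has an inverse lying in A^ε) if and only if there exists M > 1 with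
1/M ≤ |x_n|^{ε_n} ≤ M for all n. -/
theorem stmt_6 (ε : ℕ → ℝ) (hε : ∀ n, ε n ∈ Set.Ioc (0 : ℝ) 1) (x : ℕ → ℂ)
    (hx : ∃ M : ℝ, ∀ n, ‖x n‖ ^ ε n ≤ M) :
    (∃ y : ℕ → ℂ, (∃ M : ℝ, ∀ n, ‖y n‖ ^ ε n ≤ M) ∧ ∀ n, x n * y n = 1) ↔
      ∃ M : ℝ, 1 < M ∧ ∀ n, 1 / M ≤ ‖x n‖ ^ ε n ∧
        ‖x n‖ ^ ε n ≤ M := by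
  obtain ⟨Mx, hMx⟩ := hx
  constructor
  · rintro ⟨y, ⟨My, hMy⟩, hxy⟩
    refine ⟨max Mx My + 2, ?_, fun n => ?_⟩
    · have := hMx 0
      have h0 : (0:ℝ) ≤ ‖x 0‖ ^ ε 0 := Real.rpow_nonneg (norm_nonneg _) _
      have : (0:ℝ) ≤ max Mx My := le_trans h0 (le_trans (hMx 0) (le_max_left _ _))
      linarith
    have hxn : x n ≠ 0 := fun h => by simpa [h] using hxy n
    have hax : 0 < ‖x n‖ := norm_pos_iff.mpr hxn
    have hyn : y n = (x n)⁻¹ := by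
      field_simp
      linear_combination (hxy n)
    have hinv : ‖y n‖ ^ ε n = (‖x n‖ ^ ε n)⁻¹ := by
      rw [hyn, norm_inv, Real.inv_rpow (norm_nonneg _)]
    have hpos : 0 < ‖x n‖ ^ ε n := Real.rpow_pos_of_pos hax _
    have hMy' : (‖x n‖ ^ ε n)⁻¹ ≤ max Mx My + 2 := by
      rw [← hinv]
      calc ‖y n‖ ^ ε n ≤ My := hMy n
        _ ≤ max Mx My + 2 := by have := le_max_right Mx My; linarith
    constructor
    · have h2 : 0 < max Mx My + 2 := by
        have h0 : (0:ℝ) ≤ ‖x 0‖ ^ ε 0 := Real.rpow_nonneg (norm_nonneg _) _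
        have : (0:ℝ) ≤ max Mx My := le_trans h0 (le_trans (hMx 0) (le_max_left _ _))
        linarith
      rw [one_div, inv_le_comm₀ h2 hpos]
      exact hMy'
    · calc ‖x n‖ ^ ε n ≤ Mx := hMx n
        _ ≤ max Mx My + 2 := by have := le_max_left Mx My; linarith
  · rintro ⟨M, hM1, hMb⟩
    have hM0 : (0:ℝ) < M := lt_trans one_pos hM1
    refine ⟨fun n => (x n)⁻¹, ⟨M, fun n => ?_⟩, fun n => ?_⟩
    · obtain ⟨hlo, _⟩ := hMb n
      have hxn : x n ≠ 0 := by
        intro h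
        have : ‖x n‖ ^ ε n = 0 := by
          rw [h]; simp [Real.zero_rpow (ne_of_gt (hε n).1)]
        rw [this] at hlo
        have : (0:ℝ) < 1 / M := by positivity
        linarith
      have hpos : 0 < ‖x n‖ ^ ε n :=
        Real.rpow_pos_of_pos (norm_pos_iff.mpr hxn) _
      rw [norm_inv, Real.inv_rpow (norm_nonneg _)]
      rw [inv_le_comm₀ hpos hM0]
      rw [one_div] at hlo
      exact hlo
    · obtain ⟨hlo, _⟩ := hMb n
      have hxn : x n ≠ 0 := by
        intro h
        have : ‖x n‖ ^ ε n = 0 := by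
          rw [h]; simp [Real.zero_rpow (ne_of_gt (hε n).1)]
        rw [this] at hlo
        have : (0:ℝ) < 1 / M := by positivity
        linarith
      field_simp
end

section
/- Let ε, ε' be sequences in (0,1] and define A^ε = {(x_n) ∈ ℂ^ℕ : sup_n |x_n|^{ε_n} < ∞} and similarly A^{ε'}. Then A^ε ⊆ A^{ε'} if and only if there exists C > 0 such that ε'_n ≤ C ε_n for all n. In particular A^ε = A^{ε'} if and only if the sequences ε and ε' are comparable up to multiplicative constants in both directions. -/
lemma stmt_7_key (ε ε' : ℕ → ℝ) (hε : ∀ n, ε n ∈ Set.Ioc (0 : ℝ) 1)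
    (hε' : ∀ n, ε' n ∈ Set.Ioc (0 : ℝ) 1) :
    ({x : ℕ → ℂ | ∃ M : ℝ, ∀ n, ‖x n‖ ^ ε n ≤ M} ⊆
        {x : ℕ → ℂ | ∃ M : ℝ, ∀ n, ‖x n‖ ^ ε' n ≤ M} ↔
      ∃ C : ℝ, 0 < C ∧ ∀ n, ε' n ≤ C * ε n) := by
  constructor
  · intro hsub
    set x : ℕ → ℂ := fun n => (Real.exp (1 / ε n) : ℂ) with hx
    have habs : ∀ n, ‖x n‖ = Real.exp (1 / ε n) := by
      intro n
      show ‖((Real.exp (1 / ε n) : ℝ) : ℂ)‖ = _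
      rw [Complex.norm_real, Real.norm_eq_abs, abs_of_pos (Real.exp_pos _)]
    have hmem : x ∈ {x : ℕ → ℂ | ∃ M : ℝ, ∀ n, ‖x n‖ ^ ε n ≤ M} := by
      refine ⟨Real.exp 1, fun n => ?_⟩
      rw [habs n, ← Real.exp_mul, one_div, inv_mul_cancel₀ (hε n).1.ne']
    obtain ⟨M, hM⟩ := hsub hmem
    have hM' : ∀ n, ε' n / ε n ≤ Real.log M := by
      intro n
      have h1 := hM n
      rw [habs n, ← Real.exp_mul, one_div, inv_mul_eq_div] at h1
      calc ε' n / ε n = Real.log (Real.exp (ε' n / ε n)) := (Real.log_exp _).symm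
        _ ≤ Real.log M := Real.log_le_log (Real.exp_pos _) h1
    refine ⟨max (Real.log M) 1, lt_of_lt_of_le one_pos (le_max_right _ _), fun n => ?_⟩
    have h2 : ε' n ≤ Real.log M * ε n := by
      rw [← div_le_iff₀ (hε n).1] at *
      exact hM' n
    exact h2.trans (mul_le_mul_of_nonneg_right (le_max_left _ _) (hε n).1.le)
  · rintro ⟨C, hC, hCle⟩ x ⟨M, hM⟩
    refine ⟨max 1 (max M 1 ^ C), fun n => ?_⟩
    rcases le_or_gt (‖x n‖) 1 with h | h
    · exact (Real.rpow_le_one (norm_nonneg _) h (hε' n).1.le).trans (le_max_left _ _)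
    · have h1 : ‖x n‖ ^ ε' n ≤ ‖x n‖ ^ (C * ε n) :=
        Real.rpow_le_rpow_of_exponent_le h.le (hCle n)
      have h2 : ‖x n‖ ^ (C * ε n) = (‖x n‖ ^ ε n) ^ C := by
        rw [mul_comm, Real.rpow_mul (norm_nonneg _)]
      have h3 : (‖x n‖ ^ ε n) ^ C ≤ max M 1 ^ C :=
        Real.rpow_le_rpow (Real.rpow_nonneg (norm_nonneg _) _)
          ((hM n).trans (le_max_left _ _)) hC.le
      exact h1.trans (h2 ▸ h3.trans (le_max_right _ _))

/-- For sequences ε, ε' in (0,1], A^ε ⊆ A^{ε'} iff ε'_n ≤ C ε_n for some C > 0; and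
A^ε = A^{ε'} iff the two sequences are comparable in both directions. -/
theorem stmt_7 (ε ε' : ℕ → ℝ) (hε : ∀ n, ε n ∈ Set.Ioc (0 : ℝ) 1)
    (hε' : ∀ n, ε' n ∈ Set.Ioc (0 : ℝ) 1) :
    ({x : ℕ → ℂ | ∃ M : ℝ, ∀ n, ‖x n‖ ^ ε n ≤ M} ⊆
        {x : ℕ → ℂ | ∃ M : ℝ, ∀ n, ‖x n‖ ^ ε' n ≤ M} ↔
      ∃ C : ℝ, 0 < C ∧ ∀ n, ε' n ≤ C * ε n) ∧
    ({x : ℕ → ℂ | ∃ M : ℝ, ∀ n, ‖x n‖ ^ ε n ≤ M} =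
        {x : ℕ → ℂ | ∃ M : ℝ, ∀ n, ‖x n‖ ^ ε' n ≤ M} ↔
      ((∃ C : ℝ, 0 < C ∧ ∀ n, ε' n ≤ C * ε n) ∧
        (∃ C : ℝ, 0 < C ∧ ∀ n, ε n ≤ C * ε' n))) := by
  refine ⟨stmt_7_key ε ε' hε hε', ?_⟩
  rw [Set.Subset.antisymm_iff, stmt_7_key ε ε' hε hε', stmt_7_key ε' ε hε' hε]
end

section
/- Let ε = (ε_n) be a sequence in (0,1], A^ε the product Banach ring of sequences (x_n) ∈ ℂ^ℕ with sup_n |x_n|^{ε_n} < ∞, and ω a non-principal ultrafilter on ℕ with lim_ω ε_n = 0. Then the ideal ker(ω) = {(x_n) ∈ A^ε : lim_ω |x_n|^{ε_n} = 0} is a maximal ideal of A^ε, so the quotient H(ω) = A^ε / ker(ω) is a field. -/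
private lemma add_rpow_le {a b p : ℝ} (ha : 0 ≤ a) (hb : 0 ≤ b) (hp : 0 ≤ p)
    (hp1 : p ≤ 1) : (a + b) ^ p ≤ a ^ p + b ^ p := by
  lift a to NNReal using ha
  lift b to NNReal using hb
  have := NNReal.rpow_add_le_add_rpow a b hp hp1
  exact_mod_cast this

/-- The product Banach ring A^ε of sequences (x_n) ∈ ℂ^ℕ with sup_n |x_n|^{ε_n} < ∞,
as a subring of ℂ^ℕ. -/
def Aeps (ε : ℕ → ℝ) (hε : ∀ n, ε n ∈ Set.Ioc (0 : ℝ) 1) : Subring (ℕ → ℂ) where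
  carrier := {x | ∃ M : ℝ, ∀ n, ‖x n‖ ^ ε n ≤ M}
  zero_mem' := ⟨1, fun n => by
    simp [Real.zero_rpow (ne_of_gt (hε n).1)]⟩
  one_mem' := ⟨1, fun n => by simp⟩
  neg_mem' := by
    rintro x ⟨M, hM⟩
    exact ⟨M, fun n => by simpa using hM n⟩
  add_mem' := by
    rintro x y ⟨M, hM⟩ ⟨N, hN⟩
    refine ⟨M + N, fun n => ?_⟩
    calc ‖(x + y) n‖ ^ ε n
        ≤ (‖x n‖ + ‖y n‖) ^ ε n := by
          apply Real.rpow_le_rpow (norm_nonneg _) _ (le_of_lt (hε n).1)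
          exact norm_add_le _ _
      _ ≤ ‖x n‖ ^ ε n + ‖y n‖ ^ ε n :=
          add_rpow_le (norm_nonneg _) (norm_nonneg _)
            (le_of_lt (hε n).1) (hε n).2
      _ ≤ M + N := add_le_add (hM n) (hN n)
  mul_mem' := by
    rintro x y ⟨M, hM⟩ ⟨N, hN⟩
    refine ⟨M * N, fun n => ?_⟩
    have hMnn : (0 : ℝ) ≤ M :=
      le_trans (Real.rpow_nonneg (norm_nonneg _) _) (hM 0)
    calc ‖(x * y) n‖ ^ ε n
        = ‖x n‖ ^ ε n * ‖y n‖ ^ ε n := by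
          rw [Pi.mul_apply, norm_mul,
            Real.mul_rpow (norm_nonneg _) (norm_nonneg _)]
      _ ≤ M * N :=
          mul_le_mul (hM n) (hN n) (Real.rpow_nonneg (norm_nonneg _) _) hMnn


def kerI (ε : ℕ → ℝ) (hε : ∀ n, ε n ∈ Set.Ioc (0 : ℝ) 1) (ω : Ultrafilter ℕ) :
    Ideal (Aeps ε hε) where
  carrier := {x | Filter.Tendsto (fun n => ‖(x : ℕ → ℂ) n‖ ^ ε n) ω (nhds 0)}
  zero_mem' := by
    simp only [Set.mem_setOf_eq]
    have : (fun n => ‖((0 : Aeps ε hε) : ℕ → ℂ) n‖ ^ ε n) = fun _ => (0:ℝ) := by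
      funext n
      simp [Real.zero_rpow (ne_of_gt (hε n).1)]
    rw [this]
    exact tendsto_const_nhds
  add_mem' := by
    rintro x y hx hy
    refine squeeze_zero' (Filter.Eventually.of_forall fun n =>
      Real.rpow_nonneg (norm_nonneg _) _)
      (Filter.Eventually.of_forall fun n => ?_) (by simpa using hx.add hy)
    calc ‖((x:ℕ→ℂ) + y) n‖ ^ ε n
        ≤ (‖(x:ℕ→ℂ) n‖ + ‖(y:ℕ→ℂ) n‖) ^ ε n :=
          Real.rpow_le_rpow (norm_nonneg _) (norm_add_le _ _)
            (le_of_lt (hε n).1)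
      _ ≤ _ := add_rpow_le (norm_nonneg _) (norm_nonneg _)
            (le_of_lt (hε n).1) (hε n).2
  smul_mem' := by
    rintro c x hx
    simp only [smul_eq_mul, Set.mem_setOf_eq]
    obtain ⟨M, hM⟩ := c.2
    have hM0 : (0:ℝ) ≤ M := le_trans (Real.rpow_nonneg (norm_nonneg _) _) (hM 0)
    refine squeeze_zero' (Filter.Eventually.of_forall fun n =>
      Real.rpow_nonneg (norm_nonneg _) _)
      (Filter.Eventually.of_forall fun n => ?_)
      (g := fun n => M * (‖(x:ℕ→ℂ) n‖ ^ ε n)) (by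
        have hx' : Filter.Tendsto (fun n => ‖(x:ℕ→ℂ) n‖ ^ ε n)
            (ω : Filter ℕ) (nhds 0) := hx
        simpa using hx'.const_mul M)
    have : ‖((c:ℕ→ℂ) * x) n‖ ^ ε n
        = ‖(c:ℕ→ℂ) n‖ ^ ε n * ‖(x:ℕ→ℂ) n‖ ^ ε n := by
      rw [Pi.mul_apply, norm_mul,
        Real.mul_rpow (norm_nonneg _) (norm_nonneg _)]
    rw [show ((c * x : Aeps ε hε) : ℕ → ℂ) = (c:ℕ→ℂ) * x from rfl, this]
    exact mul_le_mul_of_nonneg_right (hM n) (Real.rpow_nonneg (norm_nonneg _) _)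

/-- For a non-principal ultrafilter ω with lim_ω ε_n = 0, the set
ker(ω) = {x ∈ A^ε : lim_ω |x_n|^{ε_n} = 0} is a maximal ideal of A^ε, so the quotient
H(ω) = A^ε/ker(ω) is a field. -/
theorem stmt_8 (ε : ℕ → ℝ) (hε : ∀ n, ε n ∈ Set.Ioc (0 : ℝ) 1) (ω : Ultrafilter ℕ)
    (hnp : ∀ n : ℕ, ω ≠ pure n)
    (h0 : Filter.Tendsto ε ω (nhds 0)) :
    ∃ I : Ideal (Aeps ε hε),
      (∀ x : Aeps ε hε, x ∈ I ↔
        Filter.Tendsto (fun n => ‖(x : ℕ → ℂ) n‖ ^ ε n) ω (nhds 0)) ∧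
      I.IsMaximal ∧ IsField ((Aeps ε hε) ⧸ I) := by
  classical
  have hmax : (kerI ε hε ω).IsMaximal := by
    rw [Ideal.isMaximal_iff]
    constructor
    · intro h1
      have h1 : Filter.Tendsto (fun n => ‖(1:ℕ→ℂ) n‖ ^ ε n) ω (nhds 0) := h1
      have : Filter.Tendsto (fun _ : ℕ => (1:ℝ)) ω (nhds 0) := by
        simpa using h1
      have := tendsto_nhds_unique this tendsto_const_nhds
      norm_num at this
    · rintro J x hIJ hxI hxJ
      -- x ∉ ker, construct inverse modulo ker
      set a : ℕ → ℝ := fun n => ‖(x:ℕ→ℂ) n‖ ^ ε n with ha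
      obtain ⟨M, hM⟩ := x.2
      have hamem : ∀ n, a n ∈ Set.Icc (0:ℝ) M := fun n =>
        ⟨Real.rpow_nonneg (norm_nonneg _) _, hM n⟩
      obtain ⟨L, hLmem, hL⟩ := isCompact_Icc.ultrafilter_le_nhds (Ultrafilter.map a ω)
        (by
          rw [Filter.le_principal_iff]
          exact Filter.mem_map.2 (Filter.univ_mem' hamem))
      have hta : Filter.Tendsto a ω (nhds L) := hL
      have hL0 : 0 < L := by
        rcases lt_or_eq_of_le hLmem.1 with h | h
        · exact h
        · exact absurd (show Filter.Tendsto a ω (nhds 0) by rw [h]; exact hta) hxI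
      have hS : {n | L/2 < a n} ∈ ω := hta (Ioi_mem_nhds (by linarith))
      set y : ℕ → ℂ := fun n => if L/2 < a n then ((x:ℕ→ℂ) n)⁻¹ else 0 with hy
      have hxne : ∀ n, L/2 < a n → (x:ℕ→ℂ) n ≠ 0 := by
        intro n hn h
        rw [ha] at hn
        simp only [h, norm_zero, Real.zero_rpow (ne_of_gt (hε n).1)] at hn
        linarith
      have hyA : y ∈ Aeps ε hε := by
        refine ⟨(L/2)⁻¹, fun n => ?_⟩
        by_cases hn : L/2 < a n
        · simp only [hy, if_pos hn]
          rw [norm_inv, Real.inv_rpow (norm_nonneg _)]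
          exact inv_anti₀ (by linarith) (le_of_lt hn)
        · simp only [hy, if_neg hn]
          rw [norm_zero, Real.zero_rpow (ne_of_gt (hε n).1)]
          positivity
      have hxy : x * ⟨y, hyA⟩ - 1 ∈ kerI ε hε ω := by
        show Filter.Tendsto (fun n => ‖((x * ⟨y, hyA⟩ - 1 : Aeps ε hε) : ℕ → ℂ) n‖ ^ ε n) (ω : Filter ℕ) (nhds 0)
        have hev : ∀ᶠ n in (ω : Filter ℕ),
            ‖(((x * ⟨y, hyA⟩ - 1 : Aeps ε hε) : ℕ → ℂ)) n‖ ^ ε n = 0 := by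
          filter_upwards [hS] with n hn
          have : (((x * ⟨y, hyA⟩ - 1 : Aeps ε hε) : ℕ → ℂ)) n
              = (x:ℕ→ℂ) n * y n - 1 := rfl
          rw [this, hy]
          simp only [if_pos hn, mul_inv_cancel₀ (hxne n hn), sub_self, norm_zero,
            Real.zero_rpow (ne_of_gt (hε n).1)]
        exact Filter.Tendsto.congr' (hev.mono fun n h => h.symm) tendsto_const_nhds
      have : (1 : Aeps ε hε) = x * ⟨y, hyA⟩ - (x * ⟨y, hyA⟩ - 1) := by ring
      rw [this]
      exact J.sub_mem (J.mul_mem_right _ hxJ) (hIJ hxy)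
  refine ⟨kerI ε hε ω, fun x => Iff.rfl, hmax, ?_⟩
  letI := hmax
  letI : Field ((Aeps ε hε) ⧸ kerI ε hε ω) := Ideal.Quotient.field _
  exact Field.toIsField _
end

section
/- Let ε = (ε_n) be a sequence in (0,1] and ω an ultrafilter on ℕ with lim_ω ε_n = 0. Then the seminorm |(x_n)|_ω = lim_ω |x_n|^{ε_n} on A^ε induces a non-Archimedean absolute value on the residue field H(ω) = A^ε/ker(ω); in particular |2|_ω = 1 and the ultrametric inequality |x + y|_ω ≤ max(|x|_ω, |y|_ω) holds. -/
open Filter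

lemma two_rpow_tendsto (ε : ℕ → ℝ) (ω : Ultrafilter ℕ) (h0 : Tendsto ε ω (nhds 0)) :
    Tendsto (fun n => (2 : ℝ) ^ ε n) ω (nhds 1) := by
  have hc : ContinuousAt (fun t : ℝ => (2 : ℝ) ^ t) 0 :=
    Real.continuousAt_const_rpow (by norm_num)
  have := hc.tendsto.comp h0
  simpa [Function.comp_def] using this

/-- For an ultrafilter ω with lim_ω ε_n = 0, the seminorm |x|_ω = lim_ω |x_n|^{ε_n} on
A^ε induces a non-Archimedean absolute value on H(ω) = A^ε/ker(ω): it is multiplicative,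
satisfies the ultrametric inequality |x+y|_ω ≤ max(|x|_ω, |y|_ω), and |2|_ω = 1. -/
theorem stmt_9 (ε : ℕ → ℝ) (hε : ∀ n, ε n ∈ Set.Ioc (0 : ℝ) 1) (ω : Ultrafilter ℕ)
    (h0 : Tendsto ε ω (nhds 0)) :
    (∀ x y : ℕ → ℂ,
      (∃ M : ℝ, ∀ n, ‖x n‖ ^ ε n ≤ M) →
      (∃ M : ℝ, ∀ n, ‖y n‖ ^ ε n ≤ M) →
      ∀ Lx Ly Lxy : ℝ,
        Tendsto (fun n => ‖x n‖ ^ ε n) ω (nhds Lx) →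
        Tendsto (fun n => ‖y n‖ ^ ε n) ω (nhds Ly) →
        Tendsto (fun n => ‖x n + y n‖ ^ ε n) ω (nhds Lxy) →
        Lxy ≤ max Lx Ly) ∧
    (∀ x y : ℕ → ℂ,
      (∃ M : ℝ, ∀ n, ‖x n‖ ^ ε n ≤ M) →
      (∃ M : ℝ, ∀ n, ‖y n‖ ^ ε n ≤ M) →
      ∀ Lx Ly : ℝ,
        Tendsto (fun n => ‖x n‖ ^ ε n) ω (nhds Lx) →
        Tendsto (fun n => ‖y n‖ ^ ε n) ω (nhds Ly) →
        Tendsto (fun n => ‖x n * y n‖ ^ ε n) ω (nhds (Lx * Ly))) ∧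
    Tendsto (fun n => ‖(2 : ℂ)‖ ^ ε n) ω (nhds 1) := by
  have h2 : Tendsto (fun n => (2 : ℝ) ^ ε n) ω (nhds 1) := two_rpow_tendsto ε ω h0
  refine ⟨?_, ?_, ?_⟩
  · intro x y _ _ Lx Ly Lxy hx hy hxy
    have hbound : ∀ n, ‖x n + y n‖ ^ ε n ≤
        (2 : ℝ) ^ ε n * max (‖x n‖ ^ ε n) (‖y n‖ ^ ε n) := by
      intro n
      have hεn := (hε n).1.le
      have h1 : ‖x n + y n‖ ≤ 2 * max (‖x n‖) (‖y n‖) := by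
        calc ‖x n + y n‖ ≤ ‖x n‖ + ‖y n‖ :=
              norm_add_le _ _
          _ ≤ 2 * max (‖x n‖) (‖y n‖) := by
              rw [two_mul]
              exact add_le_add (le_max_left _ _) (le_max_right _ _)
      have h3 : ‖x n + y n‖ ^ ε n ≤
          (2 * max (‖x n‖) (‖y n‖)) ^ ε n :=
        Real.rpow_le_rpow (norm_nonneg _) h1 hεn
      have h4 : (2 * max (‖x n‖) (‖y n‖)) ^ ε n =
          (2 : ℝ) ^ ε n * (max (‖x n‖) (‖y n‖)) ^ ε n :=
        Real.mul_rpow (by norm_num) (le_max_of_le_left (norm_nonneg _))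
      have h5 : (max (‖x n‖) (‖y n‖)) ^ ε n =
          max (‖x n‖ ^ ε n) (‖y n‖ ^ ε n) := by
        rcases le_total (‖x n‖) (‖y n‖) with h | h
        · rw [max_eq_right h,
            max_eq_right (Real.rpow_le_rpow (norm_nonneg _) h hεn)]
        · rw [max_eq_left h,
            max_eq_left (Real.rpow_le_rpow (norm_nonneg _) h hεn)]
      rw [h4, h5] at h3
      exact h3
    have hlim : Tendsto (fun n => (2 : ℝ) ^ ε n *
        max (‖x n‖ ^ ε n) (‖y n‖ ^ ε n)) ω (nhds (1 * max Lx Ly)) :=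
      h2.mul (hx.max hy)
    rw [one_mul] at hlim
    exact le_of_tendsto_of_tendsto' hxy hlim hbound
  · intro x y _ _ Lx Ly hx hy
    have : (fun n => ‖x n * y n‖ ^ ε n) =
        fun n => ‖x n‖ ^ ε n * ‖y n‖ ^ ε n := by
      funext n
      rw [norm_mul, Real.mul_rpow (norm_nonneg _) (norm_nonneg _)]
    rw [this]
    exact hx.mul hy
  · simpa using h2
end

section
/- Let ε = (ε_n) be a sequence in (0,1] and ω a non-principal ultrafilter on ℕ with lim_ω ε_n = 0. Then the valued field H(ω) = A^ε/ker(ω), equipped with the norm |x|_ω = lim_ω |x_n|^{ε_n}, is spherically complete: every decreasing sequence of closed balls in H(ω) has nonempty intersection. -/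
open Filter

private lemma rpow_add_le' (x y e : ℝ) (hx : 0 ≤ x) (hy : 0 ≤ y) (he : 0 ≤ e) (he1 : e ≤ 1) :
    (x + y) ^ e ≤ x ^ e + y ^ e := by
  lift x to NNReal using hx
  lift y to NNReal using hy
  have := NNReal.rpow_add_le_add_rpow x y he he1
  exact_mod_cast this

private lemma abs_rpow_add_le (x y : ℂ) (e : ℝ) (he : 0 < e) (he1 : e ≤ 1) :
    ‖x + y‖ ^ e ≤ ‖x‖ ^ e + ‖y‖ ^ e :=
  le_trans (Real.rpow_le_rpow (norm_nonneg _) (norm_add_le x y) he.le)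
    (rpow_add_le' _ _ e (norm_nonneg _) (norm_nonneg _) he.le he1)

private lemma exists_ulim (ω : Ultrafilter ℕ) (f : ℕ → ℝ) (B : ℝ)
    (h0 : ∀ n, 0 ≤ f n) (hB : ∀ n, f n ≤ B) :
    ∃ L, Tendsto f ω (nhds L) ∧ 0 ≤ L ∧ L ≤ B := by
  have hle : (Ultrafilter.map f ω : Filter ℝ) ≤ Filter.principal (Set.Icc 0 B) := by
    simp only [le_principal_iff, Ultrafilter.mem_coe, Ultrafilter.mem_map]
    exact Filter.univ_mem' fun n => ⟨h0 n, hB n⟩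
  obtain ⟨L, hL, hconv⟩ := isCompact_Icc.ultrafilter_le_nhds (Ultrafilter.map f ω) hle
  exact ⟨L, hconv, hL.1, hL.2⟩

/-- For a non-principal ultrafilter ω with lim_ω ε_n = 0, the valued field
H(ω) = A^ε/ker(ω) with norm |x|_ω = lim_ω |x_n|^{ε_n} is spherically complete: every
decreasing sequence of closed balls (centers a_i, radii r_i > 0) has a common point. -/
theorem stmt_10 (ε : ℕ → ℝ) (hε : ∀ n, ε n ∈ Set.Ioc (0 : ℝ) 1) (ω : Ultrafilter ℕ)
    (hnp : ∀ n : ℕ, ω ≠ pure n) (h0 : Tendsto ε ω (nhds 0))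
    (a : ℕ → ℕ → ℂ) (ha : ∀ i, ∃ M : ℝ, ∀ n, ‖a i n‖ ^ ε n ≤ M)
    (r : ℕ → ℝ) (hr : ∀ i, 0 < r i) (hrmono : Antitone r)
    (hnest : ∀ i j, i ≤ j → ∀ L : ℝ,
      Tendsto (fun n => ‖a j n - a i n‖ ^ ε n) ω (nhds L) → L ≤ r i) :
    ∃ b : ℕ → ℂ, (∃ M : ℝ, ∀ n, ‖b n‖ ^ ε n ≤ M) ∧
      ∀ i, ∃ L : ℝ,
        Tendsto (fun n => ‖b n - a i n‖ ^ ε n) ω (nhds L) ∧ L ≤ r i := by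
  classical
  choose M hM using ha
  have hnn : ∀ (x : ℂ) n, 0 ≤ ‖x‖ ^ ε n := fun x n =>
    Real.rpow_nonneg (norm_nonneg _) _
  -- difference bound
  have hdiff : ∀ i j n, ‖a j n - a i n‖ ^ ε n ≤ M j + M i := by
    intro i j n
    have := abs_rpow_add_le (a j n) (-(a i n)) (ε n) (hε n).1 (hε n).2
    simp only [sub_eq_add_neg, norm_neg] at this ⊢
    exact this.trans (add_le_add (hM j n) (hM i n))
  -- ultrafilter contains cofinite sets
  have hcof : ∀ m : ℕ, ∀ᶠ n in (ω : Filter ℕ), m < n := by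
    intro m
    rcases ω.le_cofinite_or_eq_pure with h | ⟨x, hx⟩
    · refine h (Filter.mem_cofinite.mpr ?_)
      exact Set.Finite.subset (Set.finite_Iic m)
        (fun n hn => Set.mem_Iic.mpr (not_lt.mp (by simpa using hn)))
    · exact absurd hx (hnp x)
  -- eventually the difference is < r i + δ for i ≤ j
  have hT : ∀ i j, i ≤ j → ∀ δ : ℝ, 0 < δ →
      ∀ᶠ n in (ω : Filter ℕ), ‖a j n - a i n‖ ^ ε n < r i + δ := by
    intro i j hij δ hδ
    obtain ⟨L, hL, -, -⟩ := exists_ulim ω _ (M j + M i) (fun n => hnn _ n) (hdiff i j)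
    have hLr : L < r i + δ := lt_of_le_of_lt (hnest i j hij L hL) (by linarith)
    exact hL.eventually_lt_const hLr
  -- the decreasing sets U m ∈ ω with empty intersection
  set U : ℕ → Set ℕ := fun m => {n | m < n ∧ ∀ i j, i ≤ j → j ≤ m →
    ‖a j n - a i n‖ ^ ε n < r i + 1 / ((m : ℝ) + 1)} with hUdef
  have hUmem : ∀ m, ∀ᶠ n in (ω : Filter ℕ), n ∈ U m := by
    intro m
    have h1 : ∀ᶠ n in (ω : Filter ℕ), ∀ i ∈ Finset.range (m + 1), ∀ j ∈ Finset.range (m + 1),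
        i ≤ j → ‖a j n - a i n‖ ^ ε n < r i + 1 / ((m : ℝ) + 1) := by
      rw [Filter.eventually_all_finset]
      intro i _
      rw [Filter.eventually_all_finset]
      intro j _
      rcases le_or_gt i j with hij | hij
      · filter_upwards [hT i j hij (1 / ((m : ℝ) + 1)) (by positivity)] with n hn _
        exact hn
      · filter_upwards with n h
        exact absurd h (not_le.mpr hij)
    filter_upwards [h1, hcof m] with n hn hmn
    exact ⟨hmn, fun i j hij hjm =>
      hn i (Finset.mem_range.mpr (Nat.lt_succ_of_le (hij.trans hjm)))
        j (Finset.mem_range.mpr (Nat.lt_succ_of_le hjm)) hij⟩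
  -- the index function and candidate point
  set k : ℕ → ℕ := fun n => Nat.findGreatest (fun m => n ∈ U m) n with hkdef
  set b : ℕ → ℂ := fun n => a (k n) n with hbdef
  have hk_mem : ∀ n, k n ≠ 0 → n ∈ U (k n) := by
    intro n h
    rw [hkdef] at h ⊢
    exact (Nat.findGreatest_eq_iff.1 rfl).2.1 h
  have hk_ge : ∀ m n, n ∈ U m → m ≤ k n := by
    intro m n hn
    rw [hkdef]
    exact Nat.le_findGreatest (le_of_lt hn.1) hn
  -- b is close to a 0
  have hb0 : ∀ n, ‖b n - a 0 n‖ ^ ε n ≤ r 0 + 1 := by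
    intro n
    by_cases h : k n = 0
    · have hbeq : b n - a 0 n = 0 := by rw [hbdef]; simp [h]
      rw [hbeq]
      simp only [norm_zero]
      rw [Real.zero_rpow (ne_of_gt (hε n).1)]
      linarith [hr 0]
    · have hmem := hk_mem n h
      have h2 := hmem.2 0 (k n) (Nat.zero_le _) le_rfl
      have h3 : (1 : ℝ) / ((k n : ℝ) + 1) ≤ 1 := by
        rw [div_le_one (by positivity)]
        have : (0 : ℝ) ≤ (k n : ℝ) := Nat.cast_nonneg _
        linarith
      have : ‖a (k n) n - a 0 n‖ ^ ε n < r 0 + 1 := by linarith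
      rw [hbdef]
      exact this.le
  -- b is bounded
  refine ⟨b, ⟨r 0 + 1 + M 0, fun n => ?_⟩, fun i => ?_⟩
  · have hbeq : b n = (b n - a 0 n) + a 0 n := by ring
    calc ‖b n‖ ^ ε n
        = ‖(b n - a 0 n) + a 0 n‖ ^ ε n := by rw [← hbeq]
      _ ≤ ‖b n - a 0 n‖ ^ ε n + ‖a 0 n‖ ^ ε n :=
          abs_rpow_add_le _ _ _ (hε n).1 (hε n).2
      _ ≤ r 0 + 1 + M 0 := add_le_add (hb0 n) (hM 0 n)
  -- the limit for each i
  · have hfb : ∀ n, ‖b n - a i n‖ ^ ε n ≤ (r 0 + 1) + (M 0 + M i) := by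
      intro n
      have hbeq : b n - a i n = (b n - a 0 n) + (a 0 n - a i n) := by ring
      rw [hbeq]
      exact (abs_rpow_add_le _ _ _ (hε n).1 (hε n).2).trans
        (add_le_add (hb0 n) (hdiff i 0 n))
    obtain ⟨L, hL, hL0, -⟩ := exists_ulim ω _ _ (fun n => hnn _ n) hfb
    refine ⟨L, hL, ?_⟩
    by_contra hcon
    push_neg at hcon
    obtain ⟨m0, hm0⟩ := exists_nat_one_div_lt (show (0 : ℝ) < (L - r i) / 2 by linarith)
    set m := max m0 (i + 1) with hmdef
    have hmi : i ≤ m := le_trans (Nat.le_succ i) (le_max_right _ _)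
    have hm1 : 1 ≤ m := le_trans (Nat.one_le_iff_ne_zero.mpr (Nat.succ_ne_zero i)) (le_max_right _ _)
    have hev : ∀ᶠ n in (ω : Filter ℕ), ‖b n - a i n‖ ^ ε n ≤ r i + (L - r i) / 2 := by
      filter_upwards [hUmem m] with n hn
      have hkm : m ≤ k n := hk_ge m n hn
      have hkne : k n ≠ 0 := by omega
      have hmem := hk_mem n hkne
      have h2 := hmem.2 i (k n) (hmi.trans hkm) le_rfl
      have h3 : (1 : ℝ) / ((k n : ℝ) + 1) ≤ 1 / ((m0 : ℝ) + 1) := by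
        apply one_div_le_one_div_of_le (by positivity)
        have : m0 ≤ k n := le_trans (le_max_left _ _) hkm
        exact_mod_cast Nat.succ_le_succ this
      rw [hbdef]
      have := h2.trans_le (by linarith : r i + 1 / ((k n : ℝ) + 1) ≤ r i + (L - r i) / 2)
      exact this.le
    have hle := le_of_tendsto hL hev
    linarith
end

section
/- Let ε = (ε_n) be a sequence in (0,1] and ω an ultrafilter on ℕ with e := lim_ω ε_n > 0. Then the map sending (x_n) ∈ A^ε to lim_ω x_n ∈ ℂ is a well-defined ring homomorphism inducing an isometric field isomorphism from H(ω) = A^ε/ker(ω) onto (ℂ, |·|^e). -/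
open Filter

set_option maxHeartbeats 1000000

/-- For an ultrafilter ω with e = lim_ω ε_n > 0, the map (x_n) ↦ lim_ω x_n is a
well-defined ring homomorphism on A^ε inducing an isometric field isomorphism of
H(ω) = A^ε/ker(ω) onto (ℂ, |·|^e): the ω-limit exists for every element of A^ε, it is
additive and multiplicative, it is isometric (lim_ω |x_n|^{ε_n} = |lim_ω x_n|^e), and it
is surjective onto ℂ. -/
theorem stmt_12 (ε : ℕ → ℝ) (hε : ∀ n, ε n ∈ Set.Ioc (0 : ℝ) 1) (ω : Ultrafilter ℕ)
    (e : ℝ) (he : 0 < e) (hεe : Tendsto ε ω (nhds e)) :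
    (∀ x : ℕ → ℂ, (∃ M : ℝ, ∀ n, ‖x n‖ ^ ε n ≤ M) →
      ∃ L : ℂ, Tendsto x ω (nhds L)) ∧
    (∀ x y : ℕ → ℂ, ∀ Lx Ly : ℂ, Tendsto x ω (nhds Lx) → Tendsto y ω (nhds Ly) →
      Tendsto (fun n => x n + y n) ω (nhds (Lx + Ly)) ∧
      Tendsto (fun n => x n * y n) ω (nhds (Lx * Ly))) ∧
    (∀ x : ℕ → ℂ, ∀ L : ℂ, Tendsto x ω (nhds L) →
      Tendsto (fun n => ‖x n‖ ^ ε n) ω (nhds (‖L‖ ^ e))) ∧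
    (∀ c : ℂ, ∃ x : ℕ → ℂ, (∃ M : ℝ, ∀ n, ‖x n‖ ^ ε n ≤ M) ∧
      Tendsto x ω (nhds c)) := by
  refine ⟨?_, ?_, ?_, ?_⟩
  · rintro x ⟨M, hM⟩
    -- along ω, ε n ≥ e/2, so |x n| ≤ R := max 1 (max M 1)^(2/e)
    set R : ℝ := max 1 ((max M 1) ^ (2 / e)) with hR
    have hball : ∀ᶠ n in (ω : Filter ℕ), x n ∈ Metric.closedBall (0 : ℂ) R := by
      have hev : ∀ᶠ n in (ω : Filter ℕ), e / 2 ≤ ε n :=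
        hεe (le_mem_nhds (by linarith))
      filter_upwards [hev] with n hn
      simp only [Metric.mem_closedBall, dist_zero_right]
      by_cases h1 : ‖x n‖ ≤ 1
      · exact h1.trans (le_max_left _ _)
      · push_neg at h1
        have hεn := (hε n).1
        have h2 : ‖x n‖ ^ ε n ≤ max M 1 := (hM n).trans (le_max_left _ _)
        have h3 : (‖x n‖ ^ ε n) ^ (2 / e) ≤ (max M 1) ^ (2 / e) :=
          Real.rpow_le_rpow (Real.rpow_nonneg (norm_nonneg _) _) h2
            (by positivity)
        rw [← Real.rpow_mul (norm_nonneg _)] at h3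
        have h4 : ‖x n‖ ≤ ‖x n‖ ^ (ε n * (2 / e)) := by
          calc ‖x n‖ = ‖x n‖ ^ (1 : ℝ) := (Real.rpow_one _).symm
          _ ≤ ‖x n‖ ^ (ε n * (2 / e)) := by
              apply Real.rpow_le_rpow_of_exponent_le h1.le
              have h2e : (0:ℝ) < 2 / e := by positivity
              rw [show (1:ℝ) = (e/2)*(2/e) by field_simp]
              exact mul_le_mul_of_nonneg_right hn h2e.le
        exact (h4.trans h3).trans (le_max_right _ _)
    have hc : IsCompact (Metric.closedBall (0 : ℂ) R) := isCompact_closedBall _ _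
    obtain ⟨L, _, hL⟩ := hc.ultrafilter_le_nhds (ω.map x)
      (le_principal_iff.mpr (by rw [Ultrafilter.coe_map, mem_map]; exact hball))
    exact ⟨L, hL⟩
  · exact fun x y Lx Ly hx hy => ⟨hx.add hy, hx.mul hy⟩
  · intro x L hx
    have habs : Tendsto (fun n => ‖x n‖) ω (nhds (‖L‖)) :=
      (continuous_norm.tendsto L).comp hx
    have hcont : ContinuousAt (fun p : ℝ × ℝ => p.1 ^ p.2) (‖L‖, e) :=
      Real.continuousAt_rpow (‖L‖, e) (Or.inr he)
    exact hcont.tendsto.comp (habs.prodMk_nhds hεe)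
  · intro c
    refine ⟨fun _ => c, ⟨max 1 (‖c‖), fun n => ?_⟩, tendsto_const_nhds⟩
    by_cases h1 : ‖c‖ ≤ 1
    · exact (Real.rpow_le_one (norm_nonneg _) h1 (hε n).1.le).trans
        (le_max_left _ _)
    · push_neg at h1
      refine le_trans ?_ (le_max_right _ _)
      calc ‖c‖ ^ ε n ≤ ‖c‖ ^ (1 : ℝ) :=
            Real.rpow_le_rpow_of_exponent_le h1.le (hε n).2
      _ = ‖c‖ := Real.rpow_one _
end

section
/- Let ω be a non-principal ultrafilter on ℕ, ε = (ε_n) a sequence in (0,1], and M_n(z) = a_n z + b_n a sequence of complex affine Möbius transformations, with x_n = M_n(0,1) ∈ ℍ³ and x_⋆ = (0,1). Then lim_ω ε_n · d_ℍ(x_n, x_⋆) < ∞ if and only if lim_ω |b_n|^{ε_n} < ∞, lim_ω |a_n|^{ε_n} < ∞, and lim_ω |a_n|^{-ε_n} < ∞. -/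
/-- Inverse hyperbolic cosine. -/
noncomputable def arcosh (x : ℝ) : ℝ := Real.log (x + Real.sqrt (x ^ 2 - 1))

/-- The hyperbolic distance on the upper half-space model ℍ³ = ℂ × ℝ_{>0}. -/
noncomputable def distH3 (p q : ℂ × ℝ) : ℝ :=
  arcosh (1 + (‖p.1 - q.1‖ ^ 2 + (p.2 - q.2) ^ 2) / (2 * p.2 * q.2))

lemma arcosh_ge_log {x : ℝ} (hx : 1 ≤ x) : Real.log x ≤ arcosh x := by
  unfold arcosh
  apply Real.log_le_log (by linarith)
  have : 0 ≤ Real.sqrt (x ^ 2 - 1) := Real.sqrt_nonneg _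
  linarith

lemma arcosh_le_log {x : ℝ} (hx : 1 ≤ x) : arcosh x ≤ Real.log x + Real.log 2 := by
  unfold arcosh
  rw [← Real.log_mul (by positivity) (by norm_num)]
  apply Real.log_le_log (by positivity)
  have h1 : Real.sqrt (x ^ 2 - 1) ≤ x := by
    calc Real.sqrt (x ^ 2 - 1) ≤ Real.sqrt (x ^ 2) := Real.sqrt_le_sqrt (by nlinarith)
      _ = x := Real.sqrt_sq (by linarith)
  linarith

lemma key1 {A B ε M : ℝ} (hA : 0 < A) (hB : 0 ≤ B) (hε0 : 0 < ε) (hε1 : ε ≤ 1)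
    (h : ε * arcosh (1 + (B ^ 2 + (A - 1) ^ 2) / (2 * A)) ≤ M) :
    B ^ ε ≤ 2 * Real.exp M ∧ A ^ ε ≤ 2 * Real.exp M ∧ A ^ (-ε) ≤ 2 * Real.exp M := by
  set X : ℝ := 1 + (B ^ 2 + (A - 1) ^ 2) / (2 * A) with hXdef
  have hX1 : 1 ≤ X := le_add_of_nonneg_right (by positivity)
  have hX0 : 0 < X := by linarith
  have hXmul : X * (2 * A) = B ^ 2 + A ^ 2 + 1 := by
    rw [hXdef]; field_simp; ring
  have hlog : ε * Real.log X ≤ M :=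
    le_trans (mul_le_mul_of_nonneg_left (arcosh_ge_log hX1) hε0.le) h
  have hXe : X ^ ε ≤ Real.exp M := by
    rw [Real.rpow_def_of_pos hX0]
    exact Real.exp_le_exp.mpr (by rw [mul_comm]; exact hlog)
  have hXe0 : 0 ≤ X ^ ε := Real.rpow_nonneg hX0.le _
  have h2e : (2:ℝ) ^ ε ≤ 2 := by
    calc (2:ℝ) ^ ε ≤ (2:ℝ) ^ (1:ℝ) := Real.rpow_le_rpow_of_exponent_le one_le_two hε1
    _ = 2 := Real.rpow_one 2
  have hexp : 0 < Real.exp M := Real.exp_pos M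
  -- bound helper: y ≤ 2*X and y ≥ 0 implies y^ε ≤ 2 * exp M
  have hbound : ∀ y : ℝ, 0 ≤ y → y ≤ 2 * X → y ^ ε ≤ 2 * Real.exp M := by
    intro y hy hle
    calc y ^ ε ≤ (2 * X) ^ ε := Real.rpow_le_rpow hy hle hε0.le
      _ = 2 ^ ε * X ^ ε := Real.mul_rpow (by norm_num) hX0.le
      _ ≤ 2 * Real.exp M := by
          apply mul_le_mul h2e hXe hXe0 (by norm_num)
  have hA2 : A ≤ 2 * X := by nlinarith [sq_nonneg B]
  have hAinv : A⁻¹ ≤ 2 * X := by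
    rw [inv_eq_one_div, div_le_iff₀ hA]
    nlinarith [sq_nonneg B, sq_nonneg A]
  have hB2 : B ^ 2 ≤ 2 * X * A := by nlinarith [sq_nonneg A]
  have haε : A ^ ε ≤ 2 * Real.exp M := hbound A hA.le hA2
  refine ⟨?_, haε, ?_⟩
  · -- B^ε ≤ 2 exp M
    have hsq : (B ^ ε) ^ 2 ≤ (2 * Real.exp M) ^ 2 := by
      have h1 : (B ^ ε) ^ 2 = (B ^ 2) ^ ε := by
        rw [← Real.rpow_natCast (B ^ ε) 2, ← Real.rpow_natCast B 2,
          ← Real.rpow_mul hB, ← Real.rpow_mul hB]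
        norm_num [mul_comm]
      rw [h1]
      calc (B ^ 2) ^ ε ≤ (2 * X * A) ^ ε := Real.rpow_le_rpow (by positivity) hB2 hε0.le
        _ = (2 * X) ^ ε * A ^ ε := Real.mul_rpow (by positivity) hA.le
        _ ≤ (2 * Real.exp M) * (2 * Real.exp M) := by
            apply mul_le_mul (hbound (2*X) (by positivity) (le_refl _)) haε
              (Real.rpow_nonneg hA.le _) (by positivity)
        _ = (2 * Real.exp M) ^ 2 := by ring
    nlinarith [Real.rpow_nonneg hB ε, hexp]
  · rw [Real.rpow_neg hA.le, ← Real.inv_rpow hA.le]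
    exact hbound A⁻¹ (by positivity) hAinv

lemma key2 {A B ε M : ℝ} (hA : 0 < A) (hB : 0 ≤ B) (hε0 : 0 < ε) (hε1 : ε ≤ 1)
    (h1 : B ^ ε ≤ M) (h2 : A ^ ε ≤ M) (h3 : A ^ (-ε) ≤ M) (hM : 1 ≤ M) :
    ε * arcosh (1 + (B ^ 2 + (A - 1) ^ 2) / (2 * A)) ≤ Real.log (3 * M ^ 3) + Real.log 2 := by
  set X : ℝ := 1 + (B ^ 2 + (A - 1) ^ 2) / (2 * A) with hXdef
  have hX1 : 1 ≤ X := le_add_of_nonneg_right (by positivity)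
  have hX0 : 0 < X := by linarith
  have hXmul : X * (2 * A) = B ^ 2 + A ^ 2 + 1 := by
    rw [hXdef]; field_simp; ring
  -- m = max of the three terms
  set m : ℝ := max (max (B ^ 2) (A ^ 2)) 1 with hmdef
  have hm1 : (1:ℝ) ≤ m := le_max_right _ _
  have hm0 : 0 < m := lt_of_lt_of_le one_pos hm1
  have hXle : X ≤ 3 * m * A⁻¹ := by
    have hb : B ^ 2 ≤ m := le_trans (le_max_left _ _) (le_max_left _ _)
    have ha' : A ^ 2 ≤ m := le_trans (le_max_right _ _) (le_max_left _ _)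
    rw [← mul_le_mul_iff_of_pos_right hA, mul_assoc, inv_mul_cancel₀ hA.ne', mul_one]
    nlinarith
  -- m ^ ε ≤ M ^ 2
  have hM0 : 0 < M := lt_of_lt_of_le one_pos hM
  have hsqb : (B ^ 2) ^ ε ≤ M ^ 2 := by
    have : (B ^ 2) ^ ε = (B ^ ε) ^ 2 := by
      rw [← Real.rpow_natCast (B ^ ε) 2, ← Real.rpow_natCast B 2,
        ← Real.rpow_mul hB, ← Real.rpow_mul hB]
      norm_num [mul_comm]
    rw [this]
    have := Real.rpow_nonneg hB ε
    nlinarith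
  have hsqa : (A ^ 2) ^ ε ≤ M ^ 2 := by
    have : (A ^ 2) ^ ε = (A ^ ε) ^ 2 := by
      rw [← Real.rpow_natCast (A ^ ε) 2, ← Real.rpow_natCast A 2,
        ← Real.rpow_mul hA.le, ← Real.rpow_mul hA.le]
      norm_num [mul_comm]
    rw [this]
    have := Real.rpow_nonneg hA.le ε
    nlinarith
  have hmε : m ^ ε ≤ M ^ 2 := by
    rcases max_cases (max (B ^ 2) (A ^ 2)) 1 with ⟨he, _⟩ | ⟨he, _⟩
    · rw [hmdef, he]
      rcases max_cases (B ^ 2) (A ^ 2) with ⟨he2, _⟩ | ⟨he2, _⟩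
      · rw [he2]; exact hsqb
      · rw [he2]; exact hsqa
    · rw [hmdef, he, Real.one_rpow]; nlinarith
  have h3e : (3:ℝ) ^ ε ≤ 3 := by
    calc (3:ℝ) ^ ε ≤ (3:ℝ) ^ (1:ℝ) := Real.rpow_le_rpow_of_exponent_le (by norm_num) hε1
    _ = 3 := Real.rpow_one 3
  have hXε : X ^ ε ≤ 3 * M ^ 3 := by
    calc X ^ ε ≤ (3 * m * A⁻¹) ^ ε := Real.rpow_le_rpow hX0.le hXle hε0.le
      _ = 3 ^ ε * m ^ ε * A⁻¹ ^ ε := by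
          rw [Real.mul_rpow (by positivity) (by positivity),
            Real.mul_rpow (by norm_num) hm0.le]
      _ ≤ 3 * M ^ 2 * M := by
          have hi : A⁻¹ ^ ε ≤ M := by
            rw [Real.inv_rpow hA.le, ← Real.rpow_neg hA.le]; exact h3
          apply mul_le_mul _ hi (by positivity) (by positivity)
          exact mul_le_mul h3e hmε (Real.rpow_nonneg hm0.le _) (by norm_num)
      _ = 3 * M ^ 3 := by ring
  have hlogX : ε * Real.log X ≤ Real.log (3 * M ^ 3) := by
    rw [← Real.log_rpow hX0]
    exact Real.log_le_log (by positivity) hXε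
  have hlog2 : ε * Real.log 2 ≤ Real.log 2 := by
    have : (0:ℝ) ≤ Real.log 2 := Real.log_nonneg (by norm_num)
    nlinarith
  calc ε * arcosh X ≤ ε * (Real.log X + Real.log 2) :=
        mul_le_mul_of_nonneg_left (arcosh_le_log hX1) hε0.le
    _ = ε * Real.log X + ε * Real.log 2 := by ring
    _ ≤ Real.log (3 * M ^ 3) + Real.log 2 := add_le_add hlogX hlog2

/-- Let ω be a non-principal ultrafilter, ε_n ∈ (0,1], M_n(z) = a_n z + b_n affine Möbius
maps, x_n = M_n(0,1) = (b_n, |a_n|) ∈ ℍ³ and x_⋆ = (0,1). Then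
lim_ω ε_n d_ℍ(x_n, x_⋆) < ∞ (i.e. ε_n d_ℍ(x_n,x_⋆) is ω-bounded) iff
lim_ω |b_n|^{ε_n} < ∞, lim_ω |a_n|^{ε_n} < ∞ and lim_ω |a_n|^{-ε_n} < ∞. -/
theorem stmt_15 (ω : Ultrafilter ℕ) (hnp : ∀ n : ℕ, ω ≠ pure n)
    (ε : ℕ → ℝ) (hε : ∀ n, ε n ∈ Set.Ioc (0 : ℝ) 1)
    (a b : ℕ → ℂ) (ha : ∀ n, a n ≠ 0) :
    (∃ M : ℝ, {n : ℕ | ε n * distH3 (a n * 0 + b n, ‖a n‖ * 1) (0, 1) ≤ M} ∈ ω)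
      ↔
    ((∃ M : ℝ, {n : ℕ | ‖b n‖ ^ ε n ≤ M} ∈ ω) ∧
     (∃ M : ℝ, {n : ℕ | ‖a n‖ ^ ε n ≤ M} ∈ ω) ∧
     (∃ M : ℝ, {n : ℕ | ‖a n‖ ^ (-(ε n)) ≤ M} ∈ ω)) := by
  have hA : ∀ n, 0 < ‖a n‖ := fun n => by
    simpa using norm_pos_iff.mpr (ha n)
  have hB : ∀ n, 0 ≤ ‖b n‖ := fun n => norm_nonneg _
  have hD : ∀ n, distH3 (a n * 0 + b n, ‖a n‖ * 1) (0, 1)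
      = arcosh (1 + ((‖b n‖) ^ 2 + (‖a n‖ - 1) ^ 2)
          / (2 * ‖a n‖)) := by
    intro n
    simp [distH3]
  constructor
  · rintro ⟨M, hM⟩
    refine ⟨⟨2 * Real.exp M, ?_⟩, ⟨2 * Real.exp M, ?_⟩, ⟨2 * Real.exp M, ?_⟩⟩ <;>
    · apply Filter.mem_of_superset hM
      intro n hn
      simp only [Set.mem_setOf_eq] at hn ⊢
      rw [hD n] at hn
      have := key1 (hA n) (hB n) (hε n).1 (hε n).2 hn
      tauto
  · rintro ⟨⟨M1, h1⟩, ⟨M2, h2⟩, ⟨M3, h3⟩⟩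
    set M : ℝ := max (max M1 M2) (max M3 1) with hMdef
    have hM1 : M1 ≤ M := le_trans (le_max_left _ _) (le_max_left _ _)
    have hM2 : M2 ≤ M := le_trans (le_max_right _ _) (le_max_left _ _)
    have hM3 : M3 ≤ M := le_trans (le_max_left _ _) (le_max_right _ _)
    have hM4 : (1:ℝ) ≤ M := le_trans (le_max_right _ _) (le_max_right _ _)
    refine ⟨Real.log (3 * M ^ 3) + Real.log 2, ?_⟩
    apply Filter.mem_of_superset (Filter.inter_mem h1 (Filter.inter_mem h2 h3))
    rintro n ⟨hn1, hn2, hn3⟩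
    simp only [Set.mem_setOf_eq] at hn1 hn2 hn3 ⊢
    rw [hD n]
    exact key2 (hA n) (hB n) (hε n).1 (hε n).2 (hn1.trans hM1) (hn2.trans hM2)
      (hn3.trans hM3) hM4
end

section
/- Let ε = (ε_n) be a sequence in (0,1], ω a non-principal ultrafilter on ℕ, and P(z) = z^m Q(z) + H(z) a degree-d polynomial with coefficients in A^ε, where Q ∈ A^ε[z] has Q_ω(0) ≠ 0 in H(ω) and all coefficients of H tend to 0 in the seminorm |·|_ω. Then for n in an ω-big set, the coordinate polynomial P_n ∈ ℂ[z] has exactly m zeros (counted with multiplicity) in the disk {|z| ≤ r^{1/ε_n}}, whenever r ∈ (0,1) is sufficiently small. Consequently, if the polynomial P_ω over H(ω) has a zero of multiplicity m at 0, then there exist m sequences of complex zeros α_{i,n} of P_n with lim_ω |α_{i,n}|^{ε_n} = 0. -/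
open Filter Polynomial

set_option maxHeartbeats 4000000

open scoped Classical

/-- coeff bound for product over small roots -/
lemma coeff_prod_small (R : ℝ) (hR0 : 0 ≤ R) (hR1 : R ≤ 1) :
    ∀ (s : Multiset ℂ), (∀ β ∈ s, ‖β‖ ≤ R) → ∀ i : ℕ,
    ‖((s.map (fun β => X - C β)).prod).coeff i‖
      ≤ 2 ^ (Multiset.card s) * R ^ (Multiset.card s - i) := by
  intro s
  induction s using Multiset.induction with
  | empty =>
    intro _ i
    simp only [Multiset.map_zero, Multiset.prod_zero, Multiset.card_zero, Nat.zero_sub, pow_zero,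
      mul_one, coeff_one]
    rcases eq_or_ne i 0 with h | h <;> simp [h]
  | cons β s ih =>
    intro hmem i
    have hβ : ‖β‖ ≤ R := hmem β (Multiset.mem_cons_self _ _)
    have hs : ∀ x ∈ s, ‖x‖ ≤ R := fun x hx => hmem x (Multiset.mem_cons_of_mem hx)
    have hprod : ((β ::ₘ s).map (fun β => X - C β)).prod
        = (X - C β) * ((s.map (fun β => X - C β)).prod) := by
      rw [Multiset.map_cons, Multiset.prod_cons]
    set p := (s.map (fun β => X - C β)).prod with hp
    set n := Multiset.card s with hn
    have ihs := ih hs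
    have hcoeff : ((X - C β) * p).coeff i = (X * p).coeff i - β * p.coeff i := by
      rw [sub_mul, coeff_sub, coeff_C_mul]
    have hRpow : ∀ j : ℕ, R * R ^ (n - (j+1)) ≤ R ^ (n - j) := by
      intro j
      rcases le_or_gt n j with h | h
      · have h1 : n - (j+1) = 0 := by omega
        have h2 : n - j = 0 := by omega
        rw [h1, h2]; simpa using hR1
      · have h2 : n - j = (n - (j+1)) + 1 := by omega
        rw [h2, pow_succ]
        nlinarith [pow_nonneg hR0 (n - (j+1))]
    have key : ‖((X - C β) * p).coeff i‖ ≤ 2 ^ (n+1) * R ^ ((n+1) - i) := by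
      rw [hcoeff]
      have habs : ‖(X * p).coeff i - β * p.coeff i‖
          ≤ ‖(X * p).coeff i‖ + ‖β‖ * ‖p.coeff i‖ := by
        refine (norm_sub_le _ _).trans ?_
        rw [norm_mul]
      refine habs.trans ?_
      have h2 : ‖β‖ * ‖p.coeff i‖ ≤ R * (2 ^ n * R ^ (n - i)) := by
        exact mul_le_mul hβ (ihs i) (norm_nonneg _) hR0
      rcases i with _ | j
      · simp only [coeff_X_mul_zero, norm_zero, zero_add, Nat.sub_zero] at h2 ⊢
        refine h2.trans ?_
        rw [pow_succ, pow_succ]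
        nlinarith [mul_nonneg (mul_nonneg (pow_nonneg (by norm_num : (0:ℝ)≤2) n) (pow_nonneg hR0 n)) hR0]
      · rw [coeff_X_mul]
        have h1 : ‖p.coeff j‖ ≤ 2 ^ n * R ^ (n - j) := ihs j
        have h2' : R * (2 ^ n * R ^ (n - (j+1))) ≤ 2 ^ n * R ^ (n - j) := by
          rw [show R * (2 ^ n * R ^ (n - (j+1))) = 2 ^ n * (R * R ^ (n - (j+1))) by ring]
          nlinarith [hRpow j, pow_pos (by norm_num : (0:ℝ) < 2) n]
        have hnj : (n + 1) - (j + 1) = n - j := by omega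
        rw [hnj]
        calc ‖p.coeff j‖ + ‖β‖ * ‖p.coeff (j+1)‖
            ≤ 2 ^ n * R ^ (n - j) + 2 ^ n * R ^ (n - j) := by
              refine add_le_add h1 (h2.trans h2')
          _ = 2 ^ (n+1) * R ^ (n - j) := by ring
    rw [hprod]
    simpa [Multiset.card_cons] using key

/-- |coeff 0| of product of (X - β) equals product of |β| -/
lemma abs_coeff_zero_prod (s : Multiset ℂ) :
    ‖((s.map (fun β => X - C β)).prod).coeff 0‖
      = ((s.map (fun z : ℂ => ‖z‖)).prod) := by
  induction s using Multiset.induction with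
  | empty => simp
  | cons β s ih =>
    rw [Multiset.map_cons, Multiset.prod_cons, Multiset.map_cons, Multiset.prod_cons]
    rw [mul_coeff_zero, norm_mul, ih]
    congr 1
    simp [coeff_sub]

/-- coeff bound for product over big roots -/
lemma coeff_prod_big (R : ℝ) (hR0 : 0 < R) :
    ∀ (s : Multiset ℂ), (∀ β ∈ s, R ≤ ‖β‖) → ∀ l : ℕ,
    ‖((s.map (fun β => X - C β)).prod).coeff l‖ * R ^ l
      ≤ 2 ^ (Multiset.card s) * ((s.map (fun z : ℂ => ‖z‖)).prod) := by
  intro s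
  induction s using Multiset.induction with
  | empty =>
    intro _ l
    simp only [Multiset.map_zero, Multiset.prod_zero, Multiset.card_zero, pow_zero, coeff_one,
      mul_one]
    rcases eq_or_ne l 0 with h | h
    · subst h; simp
    · simp [h]
  | cons β s ih =>
    intro hmem l
    have hβ : R ≤ ‖β‖ := hmem β (Multiset.mem_cons_self _ _)
    have hs : ∀ x ∈ s, R ≤ ‖x‖ := fun x hx => hmem x (Multiset.mem_cons_of_mem hx)
    have ihs := ih hs
    set p := (s.map (fun β => X - C β)).prod with hp
    set n := Multiset.card s with hn
    set Pi := (s.map (fun z : ℂ => ‖z‖)).prod with hPi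
    have hPi0 : 0 ≤ Pi := by
      rw [hPi]
      refine Multiset.prod_nonneg ?_
      intro x hx
      rw [Multiset.mem_map] at hx
      obtain ⟨y, _, rfl⟩ := hx
      exact norm_nonneg y
    rw [Multiset.map_cons, Multiset.prod_cons, Multiset.map_cons, Multiset.prod_cons,
      Multiset.card_cons]
    have hcoeff : ((X - C β) * p).coeff l = (X * p).coeff l - β * p.coeff l := by
      rw [sub_mul, coeff_sub, coeff_C_mul]
    rw [hcoeff]
    have habs : ‖(X * p).coeff l - β * p.coeff l‖
        ≤ ‖(X * p).coeff l‖ + ‖β‖ * ‖p.coeff l‖ := by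
      refine (norm_sub_le _ _).trans ?_
      rw [norm_mul]
    have hterm2 : ‖β‖ * ‖p.coeff l‖ * R ^ l ≤ ‖β‖ * (2^n * Pi) := by
      have := ihs l
      have hb0 : 0 ≤ ‖β‖ := norm_nonneg β
      calc ‖β‖ * ‖p.coeff l‖ * R ^ l
          = ‖β‖ * (‖p.coeff l‖ * R ^ l) := by ring
        _ ≤ ‖β‖ * (2^n * Pi) := by
            exact mul_le_mul_of_nonneg_left (ihs l) hb0
    rcases l with _ | j
    · have e0 : ‖(0:ℂ) - β * p.coeff 0‖ = ‖β‖ * ‖p.coeff 0‖ := by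
        rw [zero_sub, norm_neg, norm_mul]
      rw [coeff_X_mul_zero, e0, pow_zero, mul_one, pow_succ]
      simp only [pow_zero, mul_one] at hterm2
      nlinarith [hterm2, hPi0, norm_nonneg β, pow_nonneg (by norm_num : (0:ℝ) ≤ 2) n,
        mul_nonneg (norm_nonneg β) hPi0]
    · rw [coeff_X_mul]
      have h1 : ‖p.coeff j‖ * R ^ j ≤ 2^n * Pi := ihs j
      have key : (‖p.coeff j‖ + ‖β‖ * ‖p.coeff (j+1)‖) * R^(j+1)
          ≤ 2^(n+1) * (‖β‖ * Pi) := by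
        have e1 : ‖p.coeff j‖ * R^(j+1) ≤ 2^n * Pi * ‖β‖ := by
          rw [pow_succ]
          calc ‖p.coeff j‖ * (R^j * R) = (‖p.coeff j‖ * R^j) * R := by ring
            _ ≤ (2^n * Pi) * R := by
                refine mul_le_mul_of_nonneg_right h1 hR0.le
            _ ≤ (2^n * Pi) * ‖β‖ := by
                refine mul_le_mul_of_nonneg_left hβ ?_
                positivity
        have e2 : ‖β‖ * ‖p.coeff (j+1)‖ * R^(j+1)
            ≤ ‖β‖ * (2^n * Pi) := hterm2
        have expand : (‖p.coeff j‖ + ‖β‖ * ‖p.coeff (j+1)‖) * R^(j+1)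
            = ‖p.coeff j‖ * R^(j+1)
              + ‖β‖ * ‖p.coeff (j+1)‖ * R^(j+1) := by ring
        have expand2 : (2:ℝ)^(n+1) * (‖β‖ * Pi)
            = 2^n * Pi * ‖β‖ + ‖β‖ * (2^n * Pi) := by ring
        rw [expand, expand2]
        exact add_le_add e1 e2
      calc ‖p.coeff j - β * p.coeff (j+1)‖ * R^(j+1)
          ≤ (‖p.coeff j‖ + ‖β‖ * ‖p.coeff (j+1)‖) * R^(j+1) := by
            refine mul_le_mul_of_nonneg_right ?_ (by positivity)
            refine (norm_sub_le _ _).trans ?_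
            rw [norm_mul]
        _ ≤ 2^(n+1) * (‖β‖ * Pi) := key

lemma two_mul_d_le (d : ℕ) : (2 * d * 2^d : ℝ) ≤ 4^(d+1) := by
  have h1 : (d : ℝ) ≤ 2^d := by
    exact_mod_cast (Nat.lt_two_pow_self (n := d)).le
  have h2 : (0:ℝ) < 2^d := by positivity
  have h4 : (4:ℝ)^(d+1) = 4 * (2^d * 2^d) := by
    rw [pow_succ, show (4:ℝ) = 2^2 by norm_num, ← pow_mul, two_mul, pow_add]
    ring
  rw [h4]
  nlinarith

lemma core_bounds (d : ℕ) (p : Polynomial ℂ) (hp : p ≠ 0) (hdeg : p.natDegree ≤ d)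
    (R₁ R₂ : ℝ) (h1 : 0 < R₁) (h12 : 4^(d+1) * R₁ ≤ R₂) (hR2 : R₂ ≤ 1)
    (hann : ∀ β ∈ p.roots, ‖β‖ ≤ R₁ ∨ R₂ < ‖β‖) :
    ∃ W : ℝ, 0 < W ∧
      (W / 2 ≤ ‖p.coeff ((p.roots.filter (fun z => ‖z‖ ≤ R₁)).card)‖) ∧
      (∀ k, k ≤ (p.roots.filter (fun z => ‖z‖ ≤ R₁)).card →
        ‖p.coeff k‖
          ≤ (d+1) * 2^d * W * R₁ ^ ((p.roots.filter (fun z => ‖z‖ ≤ R₁)).card - k)) ∧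
      (∀ k, (p.roots.filter (fun z => ‖z‖ ≤ R₁)).card ≤ k →
        ‖p.coeff k‖ * R₂ ^ (k - (p.roots.filter (fun z => ‖z‖ ≤ R₁)).card)
          ≤ (d+1) * 2^d * W) := by
  have h4d : (1:ℝ) ≤ 4^(d+1) := by
    simpa using pow_le_pow_left₀ (by norm_num : (0:ℝ) ≤ 1) (by norm_num : (1:ℝ) ≤ 4) (d+1)
  have hR12 : R₁ ≤ R₂ := le_trans (by nlinarith) h12
  have hR20 : 0 < R₂ := lt_of_lt_of_le h1 hR12
  have hR11 : R₁ ≤ 1 := hR12.trans hR2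
  set S : Multiset ℂ := p.roots.filter (fun z => ‖z‖ ≤ R₁) with hS
  set B : Multiset ℂ := p.roots.filter (fun z => ¬ ‖z‖ ≤ R₁) with hB
  have hSB : S + B = p.roots := Multiset.filter_add_not _ _
  set s := Multiset.card S with hs
  set nB := Multiset.card B with hnB
  have hcardroots : Multiset.card p.roots = p.natDegree :=
    (splits_iff_card_roots).mp (IsAlgClosed.splits p)
  have hsd : s + nB ≤ d := by
    have hcards : s + nB = Multiset.card p.roots := by rw [← hSB, Multiset.card_add]
    rw [hcards, hcardroots]; exact hdeg
  set c := p.leadingCoeff with hc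
  have hc0 : c ≠ 0 := leadingCoeff_ne_zero.mpr hp
  have habsc : 0 < ‖c‖ := norm_pos_iff.mpr hc0
  set PS : Polynomial ℂ := (S.map (fun β => X - C β)).prod with hPS
  set PB : Polynomial ℂ := (B.map (fun β => X - C β)).prod with hPB
  set PiB : ℝ := (B.map (fun z : ℂ => ‖z‖)).prod with hPiB
  have hBbig : ∀ β ∈ B, R₂ < ‖β‖ := by
    intro β hβ
    rw [hB, Multiset.mem_filter] at hβ
    rcases hann β hβ.1 with h | h
    · exact absurd h hβ.2
    · exact h
  have hPiBpos : 0 < PiB := by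
    rw [hPiB]
    refine Multiset.prod_pos ?_
    intro x hx
    rw [Multiset.mem_map] at hx
    obtain ⟨y, hy, rfl⟩ := hx
    exact lt_trans hR20 (hBbig y hy)
  set W := ‖c‖ * PiB with hW
  have hWpos : 0 < W := mul_pos habsc hPiBpos
  refine ⟨W, hWpos, ?_⟩
  -- factorization
  have hfac : p = PS * (C c * PB) := by
    have := C_leadingCoeff_mul_prod_multiset_X_sub_C (p := p) hcardroots
    rw [← this, ← hSB, Multiset.map_add, Multiset.prod_add]
    ring
  set G : Polynomial ℂ := C c * PB with hG
  -- coefficient facts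
  have hSsmall : ∀ β ∈ S, ‖β‖ ≤ R₁ := by
    intro β hβ; rw [hS, Multiset.mem_filter] at hβ; exact hβ.2
  have hPSbound : ∀ i, ‖PS.coeff i‖ ≤ 2^s * R₁^(s - i) :=
    coeff_prod_small R₁ h1.le hR11 S hSsmall
  have hGbound : ∀ l, ‖G.coeff l‖ * R₂^l ≤ 2^nB * W := by
    intro l
    rw [hG, coeff_C_mul, norm_mul]
    have := coeff_prod_big R₂ hR20 B (fun β hβ => (hBbig β hβ).le) l
    calc ‖c‖ * ‖PB.coeff l‖ * R₂^l
        = ‖c‖ * (‖PB.coeff l‖ * R₂^l) := by ring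
      _ ≤ ‖c‖ * (2^nB * PiB) := mul_le_mul_of_nonneg_left this habsc.le
      _ = 2^nB * W := by rw [hW]; ring
  have hG0 : ‖G.coeff 0‖ = W := by
    rw [hG, coeff_C_mul, norm_mul, abs_coeff_zero_prod, hW, hPiB]
  have hPSdeg : PS.natDegree = s := natDegree_multiset_prod_X_sub_C_eq_card S
  have hPSmonic : PS.Monic := by
    refine monic_multiset_prod_of_monic _ _ ?_
    intro β _; exact monic_X_sub_C β
  have hPSs : PS.coeff s = 1 := by
    rw [← hPSdeg]; exact hPSmonic.coeff_natDegree
  have hPShigh : ∀ i, s < i → PS.coeff i = 0 := by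
    intro i hi
    exact coeff_eq_zero_of_natDegree_lt (by rw [hPSdeg]; exact hi)
  have hcoeffmul : ∀ k, p.coeff k = ∑ x ∈ Finset.HasAntidiagonal.antidiagonal k, PS.coeff x.1 * G.coeff x.2 := by
    intro k
    rw [hfac]
    exact coeff_mul _ _ _
  have h2s2nB : (2:ℝ)^s * 2^nB ≤ 2^d := by
    rw [← pow_add]
    exact pow_le_pow_right₀ (by norm_num) hsd
  -- base per-term bound, for i ≤ s
  have base : ∀ i l : ℕ, i ≤ s →
      ‖PS.coeff i * G.coeff l‖ * R₂^l ≤ 2^d * W * R₁^(s - i) := by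
    intro i l hi
    rw [norm_mul]
    calc ‖PS.coeff i‖ * ‖G.coeff l‖ * R₂^l
        = ‖PS.coeff i‖ * (‖G.coeff l‖ * R₂^l) := by ring
      _ ≤ (2^s * R₁^(s-i)) * (2^nB * W) := by
          refine mul_le_mul (hPSbound i) (hGbound l) (by positivity) (by positivity)
      _ = (2^s * 2^nB) * W * R₁^(s-i) := by ring
      _ ≤ 2^d * W * R₁^(s-i) := by
          refine mul_le_mul_of_nonneg_right (mul_le_mul_of_nonneg_right h2s2nB hWpos.le) (by positivity)
  have hterm_zero : ∀ i l : ℕ, s < i → ‖PS.coeff i * G.coeff l‖ = 0 := by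
    intro i l hi
    rw [hPShigh i hi, zero_mul, norm_zero]
  -- tb1 : for k ≤ s, per-term bound
  have tb1 : ∀ k, k ≤ s → ∀ x ∈ Finset.HasAntidiagonal.antidiagonal k,
      ‖PS.coeff x.1 * G.coeff x.2‖ ≤ 2^d * W * R₁^(s - k) := by
    rintro k hk ⟨i, l⟩ hx
    rw [Finset.HasAntidiagonal.mem_antidiagonal] at hx
    rcases lt_or_ge s i with hi | hi
    · rw [hterm_zero i l hi]; positivity
    · have hik : i ≤ k := by omega
      have hbase := base i l hi
      have hsplit : R₁^(s-i) = R₁^(s-k) * R₁^(k-i) := by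
        rw [← pow_add]; congr 1; omega
      have hRle : R₁^(k-i) ≤ R₂^(k-i) := pow_le_pow_left₀ h1.le hR12 _
      have hl : l = k - i := by omega
      have h2 : ‖PS.coeff i * G.coeff l‖ * R₂^l ≤ (2^d * W * R₁^(s-k)) * R₂^l := by
        calc ‖PS.coeff i * G.coeff l‖ * R₂^l ≤ 2^d * W * R₁^(s-i) := hbase
          _ = 2^d * W * R₁^(s-k) * R₁^(k-i) := by rw [hsplit]; ring
          _ ≤ 2^d * W * R₁^(s-k) * R₂^(k-i) := by
              refine mul_le_mul_of_nonneg_left hRle (by positivity)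
          _ = (2^d * W * R₁^(s-k)) * R₂^l := by rw [hl]
      exact le_of_mul_le_mul_right h2 (by positivity)
  -- tb2 : for k ≥ s
  have tb2 : ∀ k, s ≤ k → ∀ x ∈ Finset.HasAntidiagonal.antidiagonal k,
      ‖PS.coeff x.1 * G.coeff x.2‖ * R₂^(k-s) ≤ 2^d * W := by
    rintro k hk ⟨i, l⟩ hx
    rw [Finset.HasAntidiagonal.mem_antidiagonal] at hx
    rcases lt_or_ge s i with hi | hi
    · rw [hterm_zero i l hi, zero_mul]; positivity
    · have hbase := base i l hi
      have hRle : R₁^(s-i) ≤ R₂^(s-i) := pow_le_pow_left₀ h1.le hR12 _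
      have hlsplit : R₂^l = R₂^(k-s) * R₂^(s-i) := by
        rw [← pow_add]; congr 1; omega
      have h2 : (‖PS.coeff i * G.coeff l‖ * R₂^(k-s)) * R₂^(s-i)
          ≤ (2^d * W) * R₂^(s-i) := by
        calc (‖PS.coeff i * G.coeff l‖ * R₂^(k-s)) * R₂^(s-i)
            = ‖PS.coeff i * G.coeff l‖ * R₂^l := by rw [hlsplit]; ring
          _ ≤ 2^d * W * R₁^(s-i) := hbase
          _ ≤ 2^d * W * R₂^(s-i) := mul_le_mul_of_nonneg_left hRle (by positivity)
          _ = (2^d * W) * R₂^(s-i) := by ring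
      exact le_of_mul_le_mul_right h2 (by positivity)
  -- tb3 : terms in antidiagonal s with l ≥ 1
  have tb3 : ∀ i l : ℕ, i + l = s → 1 ≤ l →
      ‖PS.coeff i * G.coeff l‖ * R₂ ≤ 2^d * W * R₁ := by
    intro i l hil hl
    have hi : i ≤ s := by omega
    have hbase := base i l hi
    have hsi : s - i = l := by omega
    rw [hsi] at hbase
    have hR1l : R₁^l ≤ R₁ * R₂^(l-1) := by
      have : R₁^l = R₁ * R₁^(l-1) := by
        rw [← pow_succ']; congr 1; omega
      rw [this]
      exact mul_le_mul_of_nonneg_left (pow_le_pow_left₀ h1.le hR12 _) h1.le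
    have hR2l : R₂^l = R₂ * R₂^(l-1) := by
      rw [← pow_succ']; congr 1; omega
    have h2 : (‖PS.coeff i * G.coeff l‖ * R₂) * R₂^(l-1)
        ≤ (2^d * W * R₁) * R₂^(l-1) := by
      calc (‖PS.coeff i * G.coeff l‖ * R₂) * R₂^(l-1)
          = ‖PS.coeff i * G.coeff l‖ * R₂^l := by rw [hR2l]; ring
        _ ≤ 2^d * W * R₁^l := hbase
        _ ≤ 2^d * W * (R₁ * R₂^(l-1)) := mul_le_mul_of_nonneg_left hR1l (by positivity)
        _ = (2^d * W * R₁) * R₂^(l-1) := by ring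
    exact le_of_mul_le_mul_right h2 (by positivity)
  have hsled : s ≤ d := by omega
  refine ⟨?_, ?_, ?_⟩
  · -- lower bound at k = s
    have hmem : ((s, 0) : ℕ × ℕ) ∈ Finset.HasAntidiagonal.antidiagonal s := by
      rw [Finset.HasAntidiagonal.mem_antidiagonal]; simp
    have hsum := hcoeffmul s
    rw [← Finset.add_sum_erase _ _ hmem] at hsum
    have htval : PS.coeff s * G.coeff 0 = G.coeff 0 := by rw [hPSs, one_mul]
    have hrest : ‖∑ x ∈ (Finset.HasAntidiagonal.antidiagonal s).erase (s,0),
        PS.coeff x.1 * G.coeff x.2‖ ≤ W / 2 := by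
      have hsumabs : ‖∑ x ∈ (Finset.HasAntidiagonal.antidiagonal s).erase (s,0),
          PS.coeff x.1 * G.coeff x.2‖
          ≤ ∑ x ∈ (Finset.HasAntidiagonal.antidiagonal s).erase (s,0),
            ‖PS.coeff x.1 * G.coeff x.2‖ := norm_sum_le _ _
      have hcard : ((Finset.HasAntidiagonal.antidiagonal s).erase (s,0)).card = s := by
        rw [Finset.card_erase_of_mem hmem, Finset.Nat.card_antidiagonal]; omega
      have hbd : ∀ x ∈ (Finset.HasAntidiagonal.antidiagonal s).erase (s,0),
          ‖PS.coeff x.1 * G.coeff x.2‖ * R₂ ≤ 2^d * W * R₁ := by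
        rintro ⟨i, l⟩ hx
        rw [Finset.mem_erase, Finset.HasAntidiagonal.mem_antidiagonal] at hx
        rcases Nat.eq_zero_or_pos l with h0 | h0
        · subst h0
          have hi : i = s := by omega
          subst hi
          exact absurd rfl hx.1
        · exact tb3 i l hx.2 h0
      have hsum2 : (∑ x ∈ (Finset.HasAntidiagonal.antidiagonal s).erase (s,0),
          ‖PS.coeff x.1 * G.coeff x.2‖) * R₂ ≤ s * (2^d * W * R₁) := by
        rw [Finset.sum_mul]
        calc ∑ x ∈ (Finset.HasAntidiagonal.antidiagonal s).erase (s,0),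
              ‖PS.coeff x.1 * G.coeff x.2‖ * R₂
            ≤ ∑ _x ∈ (Finset.HasAntidiagonal.antidiagonal s).erase (s,0), 2^d * W * R₁ := by
              exact Finset.sum_le_sum hbd
          _ = s * (2^d * W * R₁) := by rw [Finset.sum_const, hcard, nsmul_eq_mul]
      have hfinal : s * ((2:ℝ)^d * W * R₁) ≤ (W / 2) * R₂ := by
        have h2d : (2 * s * 2^d : ℝ) * R₁ ≤ R₂ := by
          have hle : (2 * s * 2^d : ℝ) ≤ 2 * d * 2^d := by
            have : (s:ℝ) ≤ d := by exact_mod_cast hsled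
            nlinarith [pow_pos (show (0:ℝ) < 2 by norm_num) d]
          calc (2 * s * 2^d : ℝ) * R₁ ≤ (2 * d * 2^d) * R₁ :=
                mul_le_mul_of_nonneg_right hle h1.le
            _ ≤ 4^(d+1) * R₁ := mul_le_mul_of_nonneg_right (two_mul_d_le d) h1.le
            _ ≤ R₂ := h12
        nlinarith [hWpos, h1]
      calc ‖∑ x ∈ (Finset.HasAntidiagonal.antidiagonal s).erase (s,0), PS.coeff x.1 * G.coeff x.2‖
          ≤ ∑ x ∈ (Finset.HasAntidiagonal.antidiagonal s).erase (s,0),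
              ‖PS.coeff x.1 * G.coeff x.2‖ := hsumabs
        _ ≤ W / 2 := by
            have := le_of_mul_le_mul_right (hsum2.trans hfinal) hR20
            exact this
    calc W / 2 = W - W / 2 := by ring
      _ ≤ ‖G.coeff 0‖
            - ‖∑ x ∈ (Finset.HasAntidiagonal.antidiagonal s).erase (s,0),
              PS.coeff x.1 * G.coeff x.2‖ := by
          rw [hG0]; linarith [hrest]
      _ ≤ ‖G.coeff 0 + ∑ x ∈ (Finset.HasAntidiagonal.antidiagonal s).erase (s,0),
            PS.coeff x.1 * G.coeff x.2‖ := by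
          have h := norm_add_le
            (G.coeff 0 + ∑ x ∈ (Finset.HasAntidiagonal.antidiagonal s).erase (s,0), PS.coeff x.1 * G.coeff x.2)
            (-(∑ x ∈ (Finset.HasAntidiagonal.antidiagonal s).erase (s,0), PS.coeff x.1 * G.coeff x.2))
          rw [add_neg_cancel_right, norm_neg] at h
          linarith
      _ = ‖p.coeff s‖ := by rw [hsum, htval]
  · -- upper bound k ≤ s
    intro k hk
    rw [hcoeffmul k]
    calc ‖∑ x ∈ Finset.HasAntidiagonal.antidiagonal k, PS.coeff x.1 * G.coeff x.2‖
        ≤ ∑ x ∈ Finset.HasAntidiagonal.antidiagonal k, ‖PS.coeff x.1 * G.coeff x.2‖ :=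
          norm_sum_le _ _
      _ ≤ ∑ _x ∈ Finset.HasAntidiagonal.antidiagonal k, 2^d * W * R₁^(s-k) := Finset.sum_le_sum (tb1 k hk)
      _ = (k+1) * (2^d * W * R₁^(s-k)) := by
          rw [Finset.sum_const, Finset.Nat.card_antidiagonal, nsmul_eq_mul]; push_cast; ring
      _ ≤ (d+1) * 2^d * W * R₁^(s-k) := by
          have hkd1 : (k:ℝ)+1 ≤ (d:ℝ)+1 := by
            exact_mod_cast Nat.succ_le_succ (le_trans hk hsled)
          have hnn : (0:ℝ) ≤ 2^d * W * R₁^(s-k) := by positivity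
          calc ((k:ℝ)+1) * (2^d * W * R₁^(s-k)) ≤ ((d:ℝ)+1) * (2^d * W * R₁^(s-k)) :=
                mul_le_mul_of_nonneg_right hkd1 hnn
            _ = ((d:ℝ)+1) * 2^d * W * R₁^(s-k) := by ring
  · -- upper bound k ≥ s
    intro k hk
    rcases le_or_gt k d with hkd | hkd
    · rw [hcoeffmul k]
      have hsum : ‖∑ x ∈ Finset.HasAntidiagonal.antidiagonal k, PS.coeff x.1 * G.coeff x.2‖ * R₂^(k-s)
          ≤ ∑ x ∈ Finset.HasAntidiagonal.antidiagonal k, ‖PS.coeff x.1 * G.coeff x.2‖ * R₂^(k-s) := by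
        rw [← Finset.sum_mul]
        exact mul_le_mul_of_nonneg_right (norm_sum_le _ _) (by positivity)
      refine hsum.trans ?_
      calc ∑ x ∈ Finset.HasAntidiagonal.antidiagonal k, ‖PS.coeff x.1 * G.coeff x.2‖ * R₂^(k-s)
          ≤ ∑ _x ∈ Finset.HasAntidiagonal.antidiagonal k, 2^d * W := Finset.sum_le_sum (tb2 k hk)
        _ = (k+1) * (2^d * W) := by
            rw [Finset.sum_const, Finset.Nat.card_antidiagonal, nsmul_eq_mul]; push_cast; ring
        _ ≤ (d+1) * 2^d * W := by
            have hkd1 : (k:ℝ)+1 ≤ (d:ℝ)+1 := by exact_mod_cast Nat.succ_le_succ hkd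
            have hnn : (0:ℝ) ≤ 2^d * W := by positivity
            calc ((k:ℝ)+1) * (2^d * W) ≤ ((d:ℝ)+1) * (2^d * W) :=
                  mul_le_mul_of_nonneg_right hkd1 hnn
              _ = ((d:ℝ)+1) * 2^d * W := by ring
    · have : p.coeff k = 0 := coeff_eq_zero_of_natDegree_lt (lt_of_le_of_lt hdeg hkd)
      rw [this, norm_zero, zero_mul]
      positivity

/-- Exact count = m in an annulus situation -/
lemma count_eq_m (d m : ℕ) (hm : m ≤ d) (p : Polynomial ℂ) (hp : p ≠ 0) (hdeg : p.natDegree ≤ d)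
    (R₁ R₂ : ℝ) (h1 : 0 < R₁) (h12 : 4^(d+1) * R₁ ≤ R₂) (hR2 : R₂ ≤ 1)
    (hann : ∀ β ∈ p.roots, ‖β‖ ≤ R₁ ∨ R₂ < ‖β‖)
    (L δ' K' : ℝ) (hL : 0 < L)
    (ham : L ≤ ‖p.coeff m‖)
    (hsmall : ∀ k, k < m → ‖p.coeff k‖ ≤ δ')
    (hall : ∀ k, ‖p.coeff k‖ ≤ K')
    (ci : 2*((d+1)*2^d) * δ' < L * R₂^d)
    (cii : 2*((d+1)*2^d) * K' * R₁ < L) :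
    (p.roots.filter (fun z => ‖z‖ ≤ R₁)).card = m := by
  obtain ⟨W, hWpos, hlow, hup1, hup2⟩ := core_bounds d p hp hdeg R₁ R₂ h1 h12 hR2 hann
  set s := (p.roots.filter (fun z => ‖z‖ ≤ R₁)).card with hs
  have h4d : (1:ℝ) ≤ 4^(d+1) := by
    simpa using pow_le_pow_left₀ (by norm_num : (0:ℝ) ≤ 1) (by norm_num : (1:ℝ) ≤ 4) (d+1)
  have hR12 : R₁ ≤ R₂ := by nlinarith
  have hR20 : 0 < R₂ := lt_of_lt_of_le h1 hR12
  have hR11 : R₁ ≤ 1 := hR12.trans hR2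
  have hCpos : (0:ℝ) < (d+1) * 2^d := by positivity
  rcases lt_trichotomy s m with hsm | hsm | hsm
  · -- s < m : contradiction
    exfalso
    have hW2 : W ≤ 2 * δ' := by
      have := (hlow.trans (hsmall s hsm))
      linarith
    have hm2 : ‖p.coeff m‖ * R₂^(m - s) ≤ (d+1) * 2^d * W := hup2 m (le_of_lt hsm)
    have hRd : R₂^d ≤ R₂^(m-s) := by
      refine pow_le_pow_of_le_one hR20.le hR2 ?_
      omega
    have c1 : L * R₂^d ≤ L * R₂^(m-s) := mul_le_mul_of_nonneg_left hRd hL.le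
    have c2 : L * R₂^(m-s) ≤ ‖p.coeff m‖ * R₂^(m-s) :=
      mul_le_mul_of_nonneg_right ham (by positivity)
    have c3 : (d+1:ℝ) * 2^d * W ≤ (d+1) * 2^d * (2 * δ') :=
      mul_le_mul_of_nonneg_left hW2 hCpos.le
    have : L * R₂^d ≤ 2*((d+1)*2^d) * δ' := by
      calc L * R₂^d ≤ (d+1) * 2^d * (2 * δ') := by linarith
        _ = 2*((d+1)*2^d) * δ' := by ring
    linarith
  · exact hsm.symm ▸ rfl
  · -- s > m : contradiction
    exfalso
    have hW2 : W ≤ 2 * K' := by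
      have := (hlow.trans (hall s))
      linarith
    have hm1 : ‖p.coeff m‖ ≤ (d+1) * 2^d * W * R₁^(s-m) := hup1 m (le_of_lt hsm)
    have hR1sm : R₁^(s-m) ≤ R₁ := by
      have h1n : s - m ≠ 0 := by omega
      calc R₁^(s-m) ≤ R₁^1 := pow_le_pow_of_le_one h1.le hR11 (by omega)
        _ = R₁ := pow_one R₁
    have : L ≤ 2*((d+1)*2^d) * K' * R₁ := by
      calc L ≤ ‖p.coeff m‖ := ham
        _ ≤ (d+1) * 2^d * W * R₁^(s-m) := hm1
        _ ≤ (d+1) * 2^d * W * R₁ := by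
            refine mul_le_mul_of_nonneg_left hR1sm (by positivity)
        _ ≤ (d+1) * 2^d * (2*K') * R₁ := by
            refine mul_le_mul_of_nonneg_right (mul_le_mul_of_nonneg_left hW2 hCpos.le) h1.le
        _ = 2*((d+1)*2^d) * K' * R₁ := by ring
    linarith

/-- Pigeonhole: find an annulus among a geometric family of radii, and conclude the count. -/
lemma find_count (d m : ℕ) (hm : m ≤ d) (p : Polynomial ℂ) (hp : p ≠ 0) (hdeg : p.natDegree ≤ d)
    (u q : ℝ) (hu : 0 < u) (hu1 : u ≤ 1) (hq0 : 0 < q) (hq : 4^(d+1) * q ≤ 1)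
    (L δ' K' : ℝ) (hL : 0 < L)
    (ham : L ≤ ‖p.coeff m‖)
    (hsmall : ∀ k, k < m → ‖p.coeff k‖ ≤ δ')
    (hall : ∀ k, ‖p.coeff k‖ ≤ K')
    (ci : 2*((d+1)*2^d) * δ' < L * (u * q^(d+1))^d)
    (cii : 2*((d+1)*2^d) * K' * (u * q) < L) :
    ∃ v : ℝ, u * q^(d+1) ≤ v ∧ v ≤ u * q ∧
      (p.roots.filter (fun z => ‖z‖ ≤ v)).card = m := by
  have h4d : (1:ℝ) ≤ 4^(d+1) := by
    simpa using pow_le_pow_left₀ (by norm_num : (0:ℝ) ≤ 1) (by norm_num : (1:ℝ) ≤ 4) (d+1)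
  have hq1 : q ≤ 1 := by nlinarith
  set N : ℕ → ℕ := fun j => (p.roots.filter (fun z => ‖z‖ ≤ u * q^j)).card with hN
  have hrad : ∀ j : ℕ, 0 < u * q^j := fun j => by positivity
  have hradmono : ∀ j : ℕ, u * q^(j+1) ≤ u * q^j := by
    intro j
    have : q^(j+1) ≤ q^j := pow_le_pow_of_le_one hq0.le hq1 (by omega)
    nlinarith
  have hfiltermono : ∀ (a b : ℝ), a ≤ b →
      (p.roots.filter (fun z => ‖z‖ ≤ a)) ≤ (p.roots.filter (fun z => ‖z‖ ≤ b)) := by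
    intro a b hab
    exact Multiset.monotone_filter_right _ (fun z hz => le_trans hz hab)
  have hNmono : ∀ j : ℕ, N (j+1) ≤ N j :=
    fun j => Multiset.card_le_card (hfiltermono _ _ (hradmono j))
  have hN0 : N 0 ≤ d := by
    refine le_trans (Multiset.card_le_card (Multiset.filter_le _ _)) ?_
    exact le_trans (card_roots' p) hdeg
  have pigeon : ∃ j, j ≤ d ∧ N j ≤ N (j+1) := by
    by_contra hcon
    push_neg at hcon
    have hstep : ∀ j, j ≤ d + 1 → N j + j ≤ N 0 := by
      intro j
      induction j with
      | zero => intro _; omega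
      | succ i ih =>
        intro hi
        have h1' := hcon i (by omega)
        have h2' := ih (by omega)
        omega
    have := hstep (d+1) (le_refl _)
    omega
  obtain ⟨j, hjd, hNj⟩ := pigeon
  set R₁ := u * q^(j+1) with hR₁
  set R₂ := u * q^j with hR₂
  have hNeq : (p.roots.filter (fun z => ‖z‖ ≤ R₁))
      = (p.roots.filter (fun z => ‖z‖ ≤ R₂)) := by
    refine Multiset.eq_of_le_of_card_le (hfiltermono _ _ (hradmono j)) ?_
    exact hNj
  have hann : ∀ β ∈ p.roots, ‖β‖ ≤ R₁ ∨ R₂ < ‖β‖ := by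
    intro β hβ
    by_contra hcon
    push_neg at hcon
    obtain ⟨hc1, hc2⟩ := hcon
    have hβ2 : β ∈ p.roots.filter (fun z => ‖z‖ ≤ R₂) :=
      Multiset.mem_filter.mpr ⟨hβ, hc2⟩
    rw [← hNeq] at hβ2
    exact absurd (Multiset.mem_filter.mp hβ2).2 (not_le.mpr hc1)
  have h12 : 4^(d+1) * R₁ ≤ R₂ := by
    have hq4 : (4:ℝ)^(d+1) * q ≤ 1 := hq
    have : (4:ℝ)^(d+1) * R₁ = (4^(d+1) * q) * (u * q^j) := by
      rw [hR₁, pow_succ]; ring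
    rw [this, hR₂]
    nlinarith [hrad j]
  have hR2le1 : R₂ ≤ 1 := by
    have : q^j ≤ 1 := pow_le_one₀ hq0.le hq1
    rw [hR₂]; nlinarith
  have hci : 2*((d+1)*2^d) * δ' < L * R₂^d := by
    refine lt_of_lt_of_le ci ?_
    refine mul_le_mul_of_nonneg_left ?_ hL.le
    refine pow_le_pow_left₀ (by positivity) ?_ d
    rw [hR₂]
    have : q^(d+1) ≤ q^j := pow_le_pow_of_le_one hq0.le hq1 (by omega)
    nlinarith
  have hcii : 2*((d+1)*2^d) * K' * R₁ < L := by
    refine lt_of_le_of_lt ?_ cii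
    have hqle : q^(j+1) ≤ q := by
      calc q^(j+1) ≤ q^1 := pow_le_pow_of_le_one hq0.le hq1 (by omega)
        _ = q := pow_one q
    have hR1le : R₁ ≤ u * q := by rw [hR₁]; nlinarith
    have hK'0 : 0 ≤ K' := le_trans (norm_nonneg _) (hall 0)
    refine mul_le_mul_of_nonneg_left hR1le (by positivity)
  have hcount := count_eq_m d m hm p hp hdeg R₁ R₂ (hrad (j+1)) h12 hR2le1 hann
    L δ' K' hL ham hsmall hall hci hcii
  refine ⟨R₁, ?_, ?_, hcount⟩
  · rw [hR₁]
    have : q^(d+1) ≤ q^(j+1) := pow_le_pow_of_le_one hq0.le hq1 (by omega)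
    nlinarith
  · rw [hR₁]
    have : q^(j+1) ≤ q^1 := pow_le_pow_of_le_one hq0.le hq1 (by omega)
    rw [pow_one] at this
    nlinarith

lemma two_d1_le (d : ℕ) : (2 * ((d+1) * 2^d) : ℝ) ≤ 4^(d+1) := by
  have h1 : ((d:ℝ)+1) ≤ 2^(d+1) := by
    exact_mod_cast (Nat.lt_two_pow_self (n := d+1)).le.trans' (by omega)
  have h2 : (0:ℝ) < 2^d := by positivity
  have h4 : (4:ℝ)^(d+1) = (2^(d+1)) * (2^(d+1)) := by
    rw [show (4:ℝ) = 2^2 by norm_num, ← pow_mul]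
    rw [← pow_add]
    congr 1; ring
  have h5 : (2:ℝ) * ((d+1) * 2^d) = ((d:ℝ)+1) * 2^(d+1) := by
    rw [pow_succ]; ring
  rw [h4, h5]
  have h6 : (0:ℝ) < 2^(d+1) := by positivity
  nlinarith

lemma count_exact (d m : ℕ) (hmd : m ≤ d) (Q H : Polynomial ℂ)
    (hQdeg : Q.natDegree ≤ d - m) (hHdeg : H.natDegree ≤ d)
    (ε : ℝ) (hε0 : 0 < ε) (hε1 : ε ≤ 1)
    (ρ K : ℝ) (hρ : 0 < ρ) (hK : 1 ≤ K) (hρK : ρ ≤ K)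
    (hQb : ∀ k, ‖Q.coeff k‖ ^ ε ≤ K)
    (hHb : ∀ k, ‖H.coeff k‖ ^ ε ≤ K)
    (hq0 : ρ ≤ ‖Q.coeff 0‖ ^ ε)
    (r : ℝ) (hr0 : 0 < r)
    (hrr0 : r ≤ ρ * ((1:ℝ)/4^(d+1))^(d+2) / (4^(d+3) * K))
    (hH0 : ∀ k, k ≤ d →
      ‖H.coeff k‖ ^ ε < ρ * r^d * ((1:ℝ)/4^(d+1))^(d*(d+2)) / 4^(d+2)) :
    (((X^m * Q + H).roots.filter (fun z => ‖z‖ ≤ r ^ ((1:ℝ)/ε))).card) = m := by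
  set w : ℝ := (1:ℝ)/4^(d+1) with hw
  have h4pos : (0:ℝ) < 4^(d+1) := by positivity
  have hw0 : 0 < w := by rw [hw]; positivity
  have hw1 : w ≤ 1 := by
    rw [hw]
    rw [div_le_one h4pos]
    simpa using pow_le_pow_left₀ (by norm_num : (0:ℝ) ≤ 1) (by norm_num : (1:ℝ) ≤ 4) (d+1)
  set δr : ℝ := ρ * r^d * w^(d*(d+2)) / 4^(d+2) with hδr
  have hδrpos : 0 < δr := by rw [hδr]; positivity
  have hεinv1 : 1 ≤ 1/ε := by
    rw [le_div_iff₀ hε0]; linarith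
  have hεinv0 : 0 < 1/ε := by positivity
  -- r ≤ 1 and r/w^(d+2) ≤ 1
  have hrw : r / w^(d+2) ≤ ρ / (4^(d+3) * K) := by
    rw [div_le_div_iff₀ (by positivity) (by positivity)]
    calc r * (4^(d+3)*K) ≤ (ρ * w^(d+2) / (4^(d+3)*K)) * (4^(d+3)*K) := by
          refine mul_le_mul_of_nonneg_right ?_ (by positivity)
          convert hrr0 using 2
        _ = ρ * w^(d+2) := by field_simp
  have hρ43 : ρ / (4^(d+3) * K) ≤ 1 := by
    rw [div_le_one (by positivity)]
    have : (1:ℝ) ≤ 4^(d+3) := by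
      simpa using pow_le_pow_left₀ (by norm_num : (0:ℝ) ≤ 1) (by norm_num : (1:ℝ) ≤ 4) (d+3)
    nlinarith
  have hb2le1 : r / w^(d+2) ≤ 1 := hrw.trans hρ43
  have hr1 : r ≤ 1 := by
    have hwp : w^(d+2) ≤ 1 := pow_le_one₀ hw0.le hw1
    have := hb2le1
    rw [div_le_one (by positivity)] at this
    exact this.trans hwp
  -- conversion helpers
  have key : ∀ x M : ℝ, 0 ≤ x → 0 ≤ M → x ^ ε ≤ M → x ≤ M ^ (1/ε) := by
    intro x M hx hM h
    have h2 := Real.rpow_le_rpow (Real.rpow_nonneg hx ε) h (le_of_lt hεinv0)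
    rwa [← Real.rpow_mul hx, mul_one_div, div_self (ne_of_gt hε0), Real.rpow_one] at h2
  have key2 : ∀ x M : ℝ, 0 ≤ x → 0 ≤ M → M ≤ x ^ ε → M ^ (1/ε) ≤ x := by
    intro x M hx hM h
    have h2 := Real.rpow_le_rpow hM h (le_of_lt hεinv0)
    rwa [← Real.rpow_mul hx, mul_one_div, div_self (ne_of_gt hε0), Real.rpow_one] at h2
  have rpJ : ∀ (a : ℝ) (n : ℕ), 0 ≤ a → (a^((1:ℝ)/ε))^n = (a^n)^((1:ℝ)/ε) := by
    intro a n ha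
    rw [← Real.rpow_natCast (a^((1:ℝ)/ε)) n, ← Real.rpow_mul ha, mul_comm,
      Real.rpow_mul ha, Real.rpow_natCast]
  have rpM : ∀ (a b : ℝ), 0 ≤ a → 0 ≤ b →
      a^((1:ℝ)/ε) * b^((1:ℝ)/ε) = (a*b)^((1:ℝ)/ε) := by
    intro a b ha hb
    rw [← Real.mul_rpow ha hb]
  -- constants
  set L : ℝ := (ρ/2)^((1:ℝ)/ε) with hL
  set δ' : ℝ := δr^((1:ℝ)/ε) with hδ'
  set K' : ℝ := (2*K)^((1:ℝ)/ε) with hK'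
  have hLpos : 0 < L := Real.rpow_pos_of_pos (by positivity) _
  set p : Polynomial ℂ := X^m * Q + H with hp
  -- coefficients of p
  have hcoeff_lt : ∀ k, k < m → p.coeff k = H.coeff k := by
    intro k hk
    rw [hp, coeff_add, mul_comm (X^m) Q, coeff_mul_X_pow', if_neg (by omega), zero_add]
  have hcoeff_ge : ∀ k, m ≤ k → p.coeff k = Q.coeff (k-m) + H.coeff k := by
    intro k hk
    rw [hp, coeff_add, mul_comm (X^m) Q, coeff_mul_X_pow', if_pos hk]
  -- bounds
  have hQck : ∀ k, ‖Q.coeff k‖ ≤ K ^ ((1:ℝ)/ε) :=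
    fun k => key _ _ (norm_nonneg _) (by linarith) (hQb k)
  have hHck : ∀ k, ‖H.coeff k‖ ≤ K ^ ((1:ℝ)/ε) :=
    fun k => key _ _ (norm_nonneg _) (by linarith) (hHb k)
  have hHsm : ∀ k, k ≤ d → ‖H.coeff k‖ ≤ δ' :=
    fun k hk => key _ _ (norm_nonneg _) hδrpos.le (hH0 k hk).le
  have hq0' : ρ ^ ((1:ℝ)/ε) ≤ ‖Q.coeff 0‖ :=
    key2 _ _ (norm_nonneg _) hρ.le hq0
  have h2rp : (2:ℝ) ≤ 2 ^ ((1:ℝ)/ε) := by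
    calc (2:ℝ) = 2^(1:ℝ) := (Real.rpow_one 2).symm
      _ ≤ 2^((1:ℝ)/ε) := Real.rpow_le_rpow_of_exponent_le (by norm_num) hεinv1
  have hsplitρ : 2 * L ≤ ρ ^ ((1:ℝ)/ε) := by
    have : ρ ^ ((1:ℝ)/ε) = 2^((1:ℝ)/ε) * L := by
      rw [hL, rpM 2 (ρ/2) (by norm_num) (by positivity)]
      congr 1
      ring
    rw [this]
    have : 0 < L := hLpos
    nlinarith
  have hδ'L : δ' ≤ L := by
    rw [hδ', hL]
    refine Real.rpow_le_rpow hδrpos.le ?_ hεinv0.le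
    rw [hδr]
    have h1 : r^d ≤ 1 := pow_le_one₀ hr0.le hr1
    have h2 : w^(d*(d+2)) ≤ 1 := pow_le_one₀ hw0.le hw1
    have h3 : (2:ℝ) ≤ 4^(d+2) := by
      calc (2:ℝ) ≤ 4^1 := by norm_num
        _ ≤ 4^(d+2) := pow_le_pow_right₀ (by norm_num) (by omega)
    rw [div_le_div_iff₀ (by positivity) (by norm_num : (0:ℝ) < 2)]
    have h12 : r^d * w^(d*(d+2)) ≤ 1 :=
      mul_le_one₀ h1 (by positivity) h2
    nlinarith [h12, hρ, h3]
  have ham : L ≤ ‖p.coeff m‖ := by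
    rw [hcoeff_ge m (le_refl m), Nat.sub_self]
    have htri := norm_add_le (Q.coeff 0 + H.coeff m) (-(H.coeff m))
    rw [add_neg_cancel_right, norm_neg] at htri
    have hHm : ‖H.coeff m‖ ≤ δ' := hHsm m hmd
    linarith [hq0', hsplitρ, hδ'L]
  have hsmall : ∀ k, k < m → ‖p.coeff k‖ ≤ δ' := by
    intro k hk
    rw [hcoeff_lt k hk]
    exact hHsm k (by omega)
  have hKle : K ^ ((1:ℝ)/ε) ≤ K' := by
    rw [hK']
    have h0K : (0:ℝ) ≤ K := by linarith
    have hK2 : K ≤ 2*K := by linarith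
    exact Real.rpow_le_rpow h0K hK2 hεinv0.le
  have hall : ∀ k, ‖p.coeff k‖ ≤ K' := by
    intro k
    rcases lt_or_ge k m with hk | hk
    · rw [hcoeff_lt k hk]; exact (hHck k).trans hKle
    · rw [hcoeff_ge k hk]
      have h2K : 2 * K ^ ((1:ℝ)/ε) ≤ K' := by
        rw [hK', ← rpM 2 K (by norm_num) (by linarith)]
        have hKp : 0 < K ^ ((1:ℝ)/ε) := Real.rpow_pos_of_pos (by linarith) _
        nlinarith [h2rp]
      calc ‖Q.coeff (k-m) + H.coeff k‖
          ≤ ‖Q.coeff (k-m)‖ + ‖H.coeff k‖ := norm_add_le _ _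
        _ ≤ K ^ ((1:ℝ)/ε) + K ^ ((1:ℝ)/ε) := add_le_add (hQck _) (hHck _)
        _ = 2 * K ^ ((1:ℝ)/ε) := by ring
        _ ≤ K' := h2K
  -- degree and nonvanishing
  have hdeg : p.natDegree ≤ d := by
    rw [hp]
    refine le_trans (natDegree_add_le _ _) ?_
    refine max_le ?_ hHdeg
    refine le_trans (natDegree_mul_le) ?_
    rw [natDegree_X_pow]
    omega
  have hp0 : p ≠ 0 := by
    intro hzero
    rw [hzero] at ham
    simp only [coeff_zero, norm_zero] at ham
    linarith
  set q : ℝ := w^((1:ℝ)/ε) with hq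
  have hqpos : 0 < q := Real.rpow_pos_of_pos hw0 _
  have hqw : q ≤ w := by
    calc q = w^((1:ℝ)/ε) := rfl
      _ ≤ w^(1:ℝ) := Real.rpow_le_rpow_of_exponent_ge hw0 hw1 hεinv1
      _ = w := Real.rpow_one w
  have hq4 : 4^(d+1) * q ≤ 1 := by
    have h41 : (4:ℝ)^(d+1) * w = 1 := by rw [hw]; field_simp
    nlinarith [h4pos]
  have hC : (2*((d+1)*2^d) : ℝ) ≤ ((4:ℝ)^(d+1))^((1:ℝ)/ε) := by
    refine (two_d1_le d).trans ?_
    have h14 : (1:ℝ) ≤ 4^(d+1) := by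
      simpa using pow_le_pow_left₀ (by norm_num : (0:ℝ) ≤ 1) (by norm_num : (1:ℝ) ≤ 4) (d+1)
    calc (4:ℝ)^(d+1) = ((4:ℝ)^(d+1))^(1:ℝ) := (Real.rpow_one _).symm
      _ ≤ ((4:ℝ)^(d+1))^((1:ℝ)/ε) := Real.rpow_le_rpow_of_exponent_le h14 hεinv1
  have mkci : ∀ b : ℝ, 0 < b → 4^(d+1) * δr < (ρ/2) * (b*w^(d+1))^d →
      2*((d+1)*2^d) * δ' < L * ((b^((1:ℝ)/ε)) * q^(d+1))^d := by
    intro b hb hnum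
    have hbw : (0:ℝ) < b * w^(d+1) := by positivity
    have e1 : (b^((1:ℝ)/ε)) * q^(d+1) = (b*w^(d+1))^((1:ℝ)/ε) := by
      rw [hq, rpJ w (d+1) hw0.le, rpM b (w^(d+1)) hb.le (by positivity)]
    have e2 : ((b^((1:ℝ)/ε)) * q^(d+1))^d = ((b*w^(d+1))^d)^((1:ℝ)/ε) := by
      rw [e1, rpJ _ d hbw.le]
    have e3 : L * ((b*w^(d+1))^d)^((1:ℝ)/ε) = ((ρ/2) * (b*w^(d+1))^d)^((1:ℝ)/ε) := by
      rw [hL, rpM _ _ (by positivity) (by positivity)]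
    rw [e2, e3]
    calc 2*((d+1)*2^d) * δ' ≤ ((4:ℝ)^(d+1))^((1:ℝ)/ε) * δr^((1:ℝ)/ε) := by
          refine mul_le_mul hC (le_refl _) (Real.rpow_nonneg hδrpos.le _)
            (Real.rpow_nonneg (by positivity) _)
      _ = ((4:ℝ)^(d+1) * δr)^((1:ℝ)/ε) := rpM _ _ (by positivity) hδrpos.le
      _ < ((ρ/2) * (b*w^(d+1))^d)^((1:ℝ)/ε) :=
          Real.rpow_lt_rpow (by positivity) hnum hεinv0
  have mkcii : ∀ b : ℝ, 0 < b → 4^(d+1) * (2*K) * (b*w) < ρ/2 →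
      2*((d+1)*2^d) * K' * ((b^((1:ℝ)/ε)) * q) < L := by
    intro b hb hnum
    have e1 : b^((1:ℝ)/ε) * q = (b*w)^((1:ℝ)/ε) := by
      rw [hq, rpM b w hb.le hw0.le]
    rw [e1]
    have hK'0 : (0:ℝ) ≤ K' := Real.rpow_nonneg (by positivity) _
    calc 2*((d+1)*2^d) * K' * ((b*w)^((1:ℝ)/ε))
        ≤ ((4:ℝ)^(d+1))^((1:ℝ)/ε) * K' * ((b*w)^((1:ℝ)/ε)) := by
          refine mul_le_mul_of_nonneg_right
            (mul_le_mul_of_nonneg_right hC hK'0) (Real.rpow_nonneg (by positivity) _)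
      _ = ((4:ℝ)^(d+1) * (2*K) * (b*w))^((1:ℝ)/ε) := by
          rw [hK', rpM _ _ (by positivity) (by positivity), rpM _ _ (by positivity) (by positivity)]
      _ < (ρ/2)^((1:ℝ)/ε) := Real.rpow_lt_rpow (by positivity) hnum hεinv0
      _ = L := hL.symm
  -- numeric estimates
  have hmul_nat : (d+1)*d ≤ d*(d+2) := by
    calc (d+1)*d = d*d + d := by ring
      _ ≤ d*d + 2*d := by omega
      _ = d*(d+2) := by ring
  have hr' : r * (4^(d+3)*K) ≤ ρ * w^(d+2) := by
    rw [← le_div_iff₀ (by positivity)]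
    exact hrr0
  have h43 : (4:ℝ)^(d+3) = 16 * 4^(d+1) := by
    rw [show d+3 = (d+1)+2 by omega, pow_add]; ring
  have keyδ : 4^(d+1) * δr = ρ * r^d * w^(d*(d+2)) / 4 := by
    rw [hδr, show (4:ℝ)^(d+2) = 4^(d+1)*4 by rw [pow_succ]]
    field_simp
  have num1 : 4^(d+1) * δr < (ρ/2) * (r*w^(d+1))^d := by
    have e : (r*w^(d+1))^d = r^d * w^((d+1)*d) := by rw [mul_pow, ← pow_mul]
    have hww : w^(d*(d+2)) ≤ w^((d+1)*d) := pow_le_pow_of_le_one hw0.le hw1 hmul_nat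
    rw [e, keyδ, div_lt_iff₀ (by norm_num : (0:ℝ) < 4)]
    have hAF : 0 < r^d * w^((d+1)*d) := by positivity
    have step1 : ρ * r^d * w^(d*(d+2)) ≤ ρ * r^d * w^((d+1)*d) :=
      mul_le_mul_of_nonneg_left hww (by positivity)
    nlinarith [step1, mul_pos hρ hAF]
  have num2 : 4^(d+1) * (2*K) * (r*w) < ρ/2 := by
    have step : (r * (4^(d+3)*K)) * w ≤ (ρ * w^(d+2)) * w :=
      mul_le_mul_of_nonneg_right hr' hw0.le
    have hw2 : w^(d+2) ≤ 1 := pow_le_one₀ hw0.le hw1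
    have hww1 : w^(d+2) * w ≤ 1 := mul_le_one₀ hw2 hw0.le hw1
    have h1 : (ρ * w^(d+2)) * w ≤ ρ := by
      have h2 := mul_le_mul_of_nonneg_left hww1 hρ.le
      calc (ρ * w^(d+2)) * w = ρ * (w^(d+2) * w) := by ring
        _ ≤ ρ * 1 := h2
        _ = ρ := mul_one ρ
    rw [h43] at step
    have hZ : 0 < 4^(d+1)*K*r*w := by positivity
    nlinarith [step, h1, hρ, hZ]
  have num3 : 4^(d+1) * δr < (ρ/2) * ((r/w^(d+2))*w^(d+1))^d := by
    have e2 : (r/w^(d+2))*w^(d+1) = r/w := by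
      rw [show (d+2) = (d+1)+1 by omega, pow_succ]
      field_simp
    rw [e2]
    have hrw' : r ≤ r/w := by
      rw [le_div_iff₀ hw0]; nlinarith [hr0, hw1]
    have hge : r^d ≤ (r/w)^d := pow_le_pow_left₀ hr0.le hrw' d
    have hwe : w^(d*(d+2)) ≤ 1 := pow_le_one₀ hw0.le hw1
    rw [keyδ, div_lt_iff₀ (by norm_num : (0:ℝ)<4)]
    have s1 : ρ * r^d * w^(d*(d+2)) ≤ ρ * r^d := by
      have h2 := mul_le_mul_of_nonneg_left hwe (by positivity : (0:ℝ) ≤ ρ * r^d)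
      calc ρ * r^d * w^(d*(d+2)) = (ρ * r^d) * w^(d*(d+2)) := by ring
        _ ≤ (ρ * r^d) * 1 := h2
        _ = ρ * r^d := mul_one _
    have s2 : ρ * r^d ≤ ρ * (r/w)^d := mul_le_mul_of_nonneg_left hge hρ.le
    have s3 : (0:ℝ) < ρ * (r/w)^d := by positivity
    linarith
  have num4 : 4^(d+1) * (2*K) * ((r/w^(d+2))*w) < ρ/2 := by
    have e : (r/w^(d+2))*w = r/w^(d+1) := by
      rw [show (d+2) = (d+1)+1 by omega, pow_succ]
      field_simp
    rw [e]
    have hwp : (0:ℝ) < w^(d+1) := by positivity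
    have expand : 4^(d+1) * (2*K) * (r/w^(d+1)) = (4^(d+1) * (2*K) * r)/w^(d+1) := by ring
    rw [expand, div_lt_iff₀ hwp]
    have hwsplit : ρ * w^(d+2) = (ρ * w^(d+1)) * w := by
      rw [show (d+2) = (d+1)+1 by omega, pow_succ]; ring
    rw [h43, hwsplit] at hr'
    have h1 : ρ * w^(d+1) * w ≤ ρ * w^(d+1) := by
      have h2 : ρ * w^(d+1) * w ≤ ρ * w^(d+1) * 1 :=
        mul_le_mul_of_nonneg_left hw1 (by positivity)
      simpa using h2
    have hX : (0:ℝ) < 4^(d+1)*K*r := by positivity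
    nlinarith [hr', h1, hρ, hwp, hX]
  -- two applications
  have hb2pos : (0:ℝ) < r/w^(d+2) := by positivity
  obtain ⟨v₁, hv₁a, hv₁b, hv₁count⟩ := find_count d m hmd p hp0 hdeg (r^((1:ℝ)/ε)) q
    (Real.rpow_pos_of_pos hr0 _) (Real.rpow_le_one hr0.le hr1 hεinv0.le) hqpos hq4
    L δ' K' hLpos ham hsmall hall (mkci r hr0 num1) (mkcii r hr0 num2)
  obtain ⟨v₂, hv₂a, hv₂b, hv₂count⟩ := find_count d m hmd p hp0 hdeg ((r/w^(d+2))^((1:ℝ)/ε)) q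
    (Real.rpow_pos_of_pos hb2pos _) (Real.rpow_le_one hb2pos.le hb2le1 hεinv0.le) hqpos hq4
    L δ' K' hLpos ham hsmall hall (mkci _ hb2pos num3) (mkcii _ hb2pos num4)
  have hmono : ∀ a b : ℝ, a ≤ b →
      (p.roots.filter (fun z => ‖z‖ ≤ a)).card
        ≤ (p.roots.filter (fun z => ‖z‖ ≤ b)).card := by
    intro a b hab
    exact Multiset.card_le_card
      (Multiset.monotone_filter_right p.roots (fun z hz => le_trans hz hab))
  have hv1le : v₁ ≤ r^((1:ℝ)/ε) := by
    refine hv₁b.trans ?_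
    have hq1 : q ≤ 1 := hqw.trans hw1
    have h := mul_le_mul_of_nonneg_left hq1 (Real.rpow_nonneg hr0.le ((1:ℝ)/ε))
    simpa using h
  have hv2ge : r^((1:ℝ)/ε) ≤ v₂ := by
    refine le_trans ?_ hv₂a
    have e1 : ((r/w^(d+2))^((1:ℝ)/ε)) * q^(d+1) = ((r/w^(d+2)) * w^(d+1))^((1:ℝ)/ε) := by
      rw [hq, rpJ w (d+1) hw0.le, rpM _ _ hb2pos.le (by positivity)]
    have e2 : (r/w^(d+2)) * w^(d+1) = r/w := by
      rw [show (d+2) = (d+1)+1 by omega, pow_succ]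
      field_simp
    rw [e1, e2]
    refine Real.rpow_le_rpow hr0.le ?_ hεinv0.le
    rw [le_div_iff₀ hw0]; nlinarith [hr0, hw1]
  have hle1 : m ≤ (p.roots.filter (fun z => ‖z‖ ≤ r^((1:ℝ)/ε))).card := by
    rw [← hv₁count]
    exact hmono v₁ _ hv1le
  have hle2 : (p.roots.filter (fun z => ‖z‖ ≤ r^((1:ℝ)/ε))).card ≤ m := by
    rw [← hv₂count]
    exact hmono _ v₂ hv2ge
  omega

lemma sorted_prefix (l : List ℂ)
    (hl : l.Pairwise (fun a b => ‖a‖ ≤ ‖b‖))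
    (R : ℝ) (i : ℕ) (hi : i < l.length)
    (hc : i < l.countP (fun z => decide (‖z‖ ≤ R))) :
    ‖l[i]‖ ≤ R := by
  by_contra hcon
  push_neg at hcon
  have hdropbad : ∀ x ∈ l.drop i, ¬ (‖x‖ ≤ R) := by
    intro x hx
    rw [List.mem_iff_getElem] at hx
    obtain ⟨j, hj, rfl⟩ := hx
    rw [List.getElem_drop]
    rcases Nat.eq_zero_or_pos j with h0 | h0
    · subst h0
      simpa using not_le.mpr hcon
    · have hij : i + j < l.length := by
        have := hj
        rw [List.length_drop] at this
        omega
      have hrel := List.pairwise_iff_getElem.mp hl i (i+j) hi hij (by omega)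
      intro hle
      exact absurd (le_trans hrel hle) (not_le.mpr hcon)
  have h0 : (l.drop i).countP (fun z => decide (‖z‖ ≤ R)) = 0 := by
    rw [List.countP_eq_zero]
    intro a ha
    simpa using hdropbad a ha
  have hsplit : l.countP (fun z => decide (‖z‖ ≤ R))
      = (l.take i).countP (fun z => decide (‖z‖ ≤ R))
        + (l.drop i).countP (fun z => decide (‖z‖ ≤ R)) := by
    conv_lhs => rw [← List.take_append_drop i l]
    rw [List.countP_append]
  have hle : l.countP (fun z => decide (‖z‖ ≤ R)) ≤ i := by
    rw [hsplit, h0, Nat.add_zero]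
    refine le_trans (List.countP_le_length) ?_
    rw [List.length_take]
    omega
  omega

lemma take_eq_ofFn (l : List ℂ) (m : ℕ) (h : m ≤ l.length) :
    l.take m = List.ofFn (fun i : Fin m => l[(i:ℕ)]'(lt_of_lt_of_le i.2 h)) := by
  apply List.ext_getElem
  · rw [List.length_take, List.length_ofFn]
    omega
  · intro n h1 h2
    rw [List.getElem_take, List.getElem_ofFn]

open scoped Classical in
/-- Let P_n(z) = z^m Q_n(z) + H_n(z) be a sequence of complex polynomials of degree ≤ d
with coefficients in A^ε, where the coefficients of H tend to 0 along ω in the seminorm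
|·|_ω and |Q_ω(0)| ≠ 0. Then for all sufficiently small r ∈ (0,1), for an ω-big set of n
the polynomial P_n has exactly m zeros (with multiplicity) in {|z| ≤ r^{1/ε_n}};
consequently there are m sequences of zeros α_{i,n} of P_n with ∏ᵢ (z - α_{i,n})
dividing P_n for an ω-big set of n and lim_ω |α_{i,n}|^{ε_n} = 0. -/
theorem stmt_17 (ε : ℕ → ℝ) (hε : ∀ n, ε n ∈ Set.Ioc (0 : ℝ) 1) (ω : Ultrafilter ℕ)
    (hnp : ∀ n : ℕ, ω ≠ pure n) (h0 : Tendsto ε ω (nhds 0))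
    (m d : ℕ) (hmd : m ≤ d)
    (Q H : ℕ → Polynomial ℂ)
    (hQdeg : ∀ n, (Q n).natDegree ≤ d - m) (hHdeg : ∀ n, (H n).natDegree ≤ d)
    (hQbd : ∀ k, ∃ M : ℝ, ∀ n, ‖(Q n).coeff k‖ ^ ε n ≤ M)
    (hHbd : ∀ k, ∃ M : ℝ, ∀ n, ‖(H n).coeff k‖ ^ ε n ≤ M)
    (hQ0 : ∃ ρ : ℝ, 0 < ρ ∧ {n : ℕ | ρ ≤ ‖(Q n).coeff 0‖ ^ ε n} ∈ ω)
    (hH0 : ∀ k, Tendsto (fun n => ‖(H n).coeff k‖ ^ ε n) ω (nhds 0)) :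
    (∃ r₀ : ℝ, r₀ ∈ Set.Ioo (0 : ℝ) 1 ∧ ∀ r : ℝ, r ∈ Set.Ioc (0 : ℝ) r₀ →
      {n : ℕ |
        (((X ^ m * Q n + H n).roots.filter
            fun z => ‖z‖ ≤ r ^ (1 / ε n)).card : ℕ) = m} ∈ ω) ∧
    ∃ α : Fin m → ℕ → ℂ,
      (∀ i, Tendsto (fun n => ‖α i n‖ ^ ε n) ω (nhds 0)) ∧
      {n : ℕ | (∏ i : Fin m, (X - C (α i n))) ∣ (X ^ m * Q n + H n)} ∈ ω := by
  obtain ⟨ρ, hρ, hQ0mem⟩ := hQ0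
  choose MQ hMQ using hQbd
  choose MH hMH using hHbd
  set K : ℝ := 1 + ∑ k ∈ Finset.range (d+1), (|MQ k| + |MH k|) with hKdef
  have hsumnn : (0:ℝ) ≤ ∑ k ∈ Finset.range (d+1), (|MQ k| + |MH k|) :=
    Finset.sum_nonneg fun k _ => by positivity
  have hK1 : (1:ℝ) ≤ K := by rw [hKdef]; linarith
  have hMle : ∀ k, k ≤ d → |MQ k| + |MH k| ≤ K - 1 := by
    intro k hk
    rw [hKdef]
    have := Finset.single_le_sum (f := fun k => |MQ k| + |MH k|)
      (fun j _ => by positivity) (Finset.mem_range.mpr (by omega : k < d+1))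
    simpa using this
  have hQbK : ∀ n k, ‖(Q n).coeff k‖ ^ ε n ≤ K := by
    intro n k
    rcases le_or_gt k d with hk | hk
    · refine (hMQ k n).trans ?_
      have h1 := hMle k hk
      have h2 : MQ k ≤ |MQ k| := le_abs_self _
      have h3 : (0:ℝ) ≤ |MH k| := abs_nonneg _
      linarith
    · have hz : (Q n).coeff k = 0 :=
        coeff_eq_zero_of_natDegree_lt (lt_of_le_of_lt (hQdeg n) (by omega))
      rw [hz, norm_zero, Real.zero_rpow (ne_of_gt (hε n).1)]
      linarith
  have hHbK : ∀ n k, ‖(H n).coeff k‖ ^ ε n ≤ K := by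
    intro n k
    rcases le_or_gt k d with hk | hk
    · refine (hMH k n).trans ?_
      have h1 := hMle k hk
      have h2 : MH k ≤ |MH k| := le_abs_self _
      have h3 : (0:ℝ) ≤ |MQ k| := abs_nonneg _
      linarith
    · have hz : (H n).coeff k = 0 :=
        coeff_eq_zero_of_natDegree_lt (lt_of_le_of_lt (hHdeg n) hk)
      rw [hz, norm_zero, Real.zero_rpow (ne_of_gt (hε n).1)]
      linarith
  have hρK : ρ ≤ K := by
    obtain ⟨n₀, hn₀⟩ := Filter.nonempty_of_mem (Ultrafilter.mem_coe.mpr hQ0mem)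
    exact le_trans hn₀ (hQbK n₀ 0)
  set w : ℝ := (1:ℝ)/4^(d+1) with hw
  have hwpos : 0 < w := by rw [hw]; positivity
  set r₀ : ℝ := ρ * w^(d+2) / (4^(d+3) * K) with hr₀
  have hr₀pos : 0 < r₀ := by rw [hr₀]; positivity
  have hr₀lt1 : r₀ < 1 := by
    rw [hr₀]
    rw [div_lt_one (by positivity)]
    have hwle : w^(d+2) ≤ 1 := by
      refine pow_le_one₀ hwpos.le ?_
      rw [hw, div_le_one (by positivity)]
      simpa using pow_le_pow_left₀ (by norm_num : (0:ℝ) ≤ 1) (by norm_num : (1:ℝ) ≤ 4) (d+1)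
    have h16 : (1:ℝ) < 4^(d+3) := by
      calc (1:ℝ) < 4 := by norm_num
        _ = 4^1 := (pow_one 4).symm
        _ ≤ 4^(d+3) := pow_le_pow_right₀ (by norm_num) (by omega)
    nlinarith [hρK, hρ, hK1]
  -- the main per-r membership statement
  have hmain : ∀ r : ℝ, r ∈ Set.Ioc (0:ℝ) r₀ →
      {n : ℕ | (((X ^ m * Q n + H n).roots.filter
          fun z => ‖z‖ ≤ r ^ (1 / ε n)).card : ℕ) = m} ∈ ω := by
    intro r hr
    obtain ⟨hrpos, hrle⟩ := hr
    set δr : ℝ := ρ * r^d * w^(d*(d+2)) / 4^(d+2) with hδr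
    have hδrpos : 0 < δr := by rw [hδr]; positivity
    have hbig : ∀ᶠ n in (ω : Filter ℕ), ρ ≤ ‖(Q n).coeff 0‖ ^ ε n := by
      rwa [Filter.eventually_iff, Ultrafilter.mem_coe]
    have hsmall : ∀ᶠ n in (ω : Filter ℕ), ∀ k ∈ Finset.range (d+1),
        ‖(H n).coeff k‖ ^ ε n < δr := by
      rw [Filter.eventually_all_finset]
      intro k _
      exact (hH0 k).eventually_lt_const hδrpos
    have hev : ∀ᶠ n in (ω : Filter ℕ),
        (((X ^ m * Q n + H n).roots.filter
          fun z => ‖z‖ ≤ r ^ (1 / ε n)).card : ℕ) = m := by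
      filter_upwards [hbig, hsmall] with n h1 h2
      exact count_exact d m hmd (Q n) (H n) (hQdeg n) (hHdeg n) (ε n) (hε n).1 (hε n).2
        ρ K hρ hK1 hρK (hQbK n) (hHbK n) h1 r hrpos (by rw [← hw, ← hr₀]; exact hrle)
        (fun k hk => h2 k (Finset.mem_range.mpr (by omega)))
    rwa [Filter.eventually_iff, Ultrafilter.mem_coe] at hev
  refine ⟨⟨r₀, ⟨hr₀pos, hr₀lt1⟩, hmain⟩, ?_⟩
  -- Part 2
  set sortfn : ℕ → List ℂ := fun n =>
    ((X^m * Q n + H n).roots.toList.mergeSort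
      (fun a b => decide (‖a‖ ≤ ‖b‖))) with hsortfn
  have hsorted : ∀ n, (sortfn n).Pairwise (fun a b => ‖a‖ ≤ ‖b‖) := by
    intro n
    have h := List.pairwise_mergeSort
      (le := fun a b : ℂ => decide (‖a‖ ≤ ‖b‖))
      (fun a b c hab hbc => by
        simp only [decide_eq_true_eq] at *
        exact le_trans hab hbc)
      (fun a b => by
        simp only [Bool.or_eq_true, decide_eq_true_eq]
        exact le_total _ _)
      ((X^m * Q n + H n).roots.toList)
    refine h.imp ?_
    intro a b hab
    simpa using hab
  have hcount_list : ∀ n (R : ℝ),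
      ((X^m * Q n + H n).roots.filter (fun z => ‖z‖ ≤ R)).card
        = (sortfn n).countP (fun z => decide (‖z‖ ≤ R)) := by
    intro n R
    have hperm : (sortfn n).Perm ((X^m * Q n + H n).roots.toList) :=
      List.mergeSort_perm _ _
    rw [List.Perm.countP_eq _ hperm, List.countP_eq_length_filter, ← Multiset.coe_card,
      ← Multiset.filter_coe, Multiset.coe_toList]
  set α : Fin m → ℕ → ℂ := fun i n =>
    if h : (i:ℕ) < (sortfn n).length then (sortfn n)[(i:ℕ)] else 0 with hα
  -- key pointwise bound
  have hkey : ∀ (r : ℝ) (n : ℕ), 0 < r →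
      (((X ^ m * Q n + H n).roots.filter
          fun z => ‖z‖ ≤ r ^ (1 / ε n)).card : ℕ) = m →
      ∀ i : Fin m, ‖α i n‖ ^ ε n ≤ r := by
    intro r n hrpos hcount i
    have hcnt : (sortfn n).countP (fun z => decide (‖z‖ ≤ r ^ (1/ε n))) = m := by
      rw [← hcount_list]; exact hcount
    have hlen : m ≤ (sortfn n).length := by
      rw [← hcnt]; exact List.countP_le_length
    have hidx : (i:ℕ) < (sortfn n).length := lt_of_lt_of_le i.2 hlen
    have hαval : α i n = (sortfn n)[(i:ℕ)] := by rw [hα]; exact dif_pos hidx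
    have habs : ‖(sortfn n)[(i:ℕ)]‖ ≤ r ^ (1/ε n) :=
      sorted_prefix (sortfn n) (hsorted n) _ i hidx (by rw [hcnt]; exact i.2)
    rw [hαval]
    have hε0 := (hε n).1
    calc ‖(sortfn n)[(i:ℕ)]‖ ^ ε n ≤ (r ^ (1/ε n)) ^ ε n :=
          Real.rpow_le_rpow (norm_nonneg _) habs hε0.le
      _ = r := by
          rw [← Real.rpow_mul hrpos.le, one_div, inv_mul_cancel₀ (ne_of_gt hε0), Real.rpow_one]
  refine ⟨α, ?_, ?_⟩
  · -- tendsto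
    intro i
    rw [NormedAddCommGroup.tendsto_nhds_zero]
    intro δ hδ
    set r : ℝ := min r₀ (δ/2) with hrdef
    have hrIoc : r ∈ Set.Ioc (0:ℝ) r₀ :=
      ⟨lt_min hr₀pos (by linarith), min_le_left _ _⟩
    have h1 := hmain r hrIoc
    rw [← Ultrafilter.mem_coe, ← Filter.eventually_iff] at h1
    filter_upwards [h1] with n hn
    have hb := hkey r n hrIoc.1 hn i
    have hnn : (0:ℝ) ≤ ‖α i n‖ ^ ε n := Real.rpow_nonneg (norm_nonneg _) _
    rw [Real.norm_eq_abs, abs_of_nonneg hnn]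
    calc ‖α i n‖ ^ ε n ≤ r := hb
      _ ≤ δ/2 := min_le_right _ _
      _ < δ := by linarith
  · -- divisibility
    have h1 := hmain r₀ ⟨hr₀pos, le_refl _⟩
    rw [← Ultrafilter.mem_coe, ← Filter.eventually_iff] at h1
    have hev : ∀ᶠ n in (ω : Filter ℕ),
        (∏ i : Fin m, (X - C (α i n))) ∣ (X ^ m * Q n + H n) := by
      filter_upwards [h1] with n hn
      have hcnt : (sortfn n).countP
          (fun z => decide (‖z‖ ≤ r₀ ^ (1/ε n))) = m := by
        rw [← hcount_list]; exact hn
      have hlen : m ≤ (sortfn n).length := by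
        rw [← hcnt]; exact List.countP_le_length
      have hprodeq : (∏ i : Fin m, (X - C (α i n)))
          = (((sortfn n).take m).map (fun z => (X : Polynomial ℂ) - C z)).prod := by
        rw [take_eq_ofFn _ _ hlen, List.map_ofFn, List.prod_ofFn]
        refine Finset.prod_congr rfl ?_
        intro i _
        have hidx : (i:ℕ) < (sortfn n).length := lt_of_lt_of_le i.2 hlen
        rw [hα]
        simp only [Function.comp]
        rw [dif_pos hidx]
      rw [hprodeq]
      have hsub : (((sortfn n).take m : List ℂ) : Multiset ℂ) ≤ (X^m * Q n + H n).roots := by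
        have hsp : ((sortfn n).take m).Subperm ((X^m * Q n + H n).roots.toList) :=
          (List.take_sublist m _).subperm.trans (List.mergeSort_perm _ _).subperm
        have h2 : (((sortfn n).take m : List ℂ) : Multiset ℂ)
            ≤ (((X^m * Q n + H n).roots.toList : List ℂ) : Multiset ℂ) :=
          Multiset.coe_le.mpr hsp
        rwa [Multiset.coe_toList] at h2
      have hdvd1 : (((sortfn n).take m).map (fun z => (X : Polynomial ℂ) - C z)).prod
          ∣ (Multiset.map (fun a => (X : Polynomial ℂ) - C a) (X^m * Q n + H n).roots).prod := by
        have hmaple := Multiset.map_le_map (f := fun z => (X : Polynomial ℂ) - C z) hsub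
        have := Multiset.prod_dvd_prod_of_le hmaple
        rwa [Multiset.map_coe, Multiset.prod_coe] at this
      exact dvd_trans hdvd1 (prod_multiset_X_sub_C_dvd _)
    rwa [Filter.eventually_iff, Ultrafilter.mem_coe] at hev
end

section
/- Let (z_n), (w_n) be sequences in ℂ defining elements z, w of A^ε for a sequence ε = (ε_n) in (0,1], and let ω be an ultrafilter on ℕ with lim_ω ε_n = 0. Then the ε_n-th powers of the spherical (chordal) distances converge to the non-Archimedean projective distance: lim_ω ( |z_n - w_n| / (√(|z_n|²+1) · √(|w_n|²+1)) )^{ε_n} = |z_ω - w_ω|_ω / (max(|z_ω|_ω, 1) · max(|w_ω|_ω, 1)), where z_ω, w_ω denote the images of z, w in the residue field H(ω) with norm |x|_ω = lim_ω |x_n|^{ε_n}. -/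
open Filter

lemma max_rpow_one {a e : ℝ} (ha : 0 ≤ a) (he : 0 ≤ e) :
    (max a 1) ^ e = max (a ^ e) 1 := by
  rcases le_total a 1 with h | h
  · rw [max_eq_right h, max_eq_right (Real.rpow_le_one ha h he), Real.one_rpow]
  · rw [max_eq_left h, max_eq_left (Real.one_le_rpow h he)]

lemma sqrt_aux (ε : ℕ → ℝ) (hε : ∀ n, ε n ∈ Set.Ioc (0 : ℝ) 1) (ω : Ultrafilter ℕ)
    (h0 : Tendsto ε ω (nhds 0)) (z : ℕ → ℂ) (Lz : ℝ)
    (hLz : Tendsto (fun n => ‖z n‖ ^ ε n) ω (nhds Lz)) :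
    Tendsto (fun n => Real.sqrt (‖z n‖ ^ 2 + 1) ^ ε n) ω
      (nhds (max Lz 1)) := by
  have hεnn : ∀ n, 0 ≤ ε n := fun n => le_of_lt (hε n).1
  have hmax : ∀ n, (0:ℝ) ≤ max (‖z n‖) 1 := fun n => le_trans zero_le_one (le_max_right _ _)
  -- lower and upper bounds
  have hlow : ∀ n, max (‖z n‖) 1 ≤ Real.sqrt (‖z n‖ ^ 2 + 1) := by
    intro n
    rw [show max (‖z n‖) 1 = Real.sqrt ((max (‖z n‖) 1) ^ 2) by
      rw [Real.sqrt_sq (hmax n)]]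
    apply Real.sqrt_le_sqrt
    rcases le_total (‖z n‖) 1 with h | h
    · rw [max_eq_right h]; nlinarith [sq_nonneg (‖z n‖)]
    · rw [max_eq_left h]; nlinarith
  have hhigh : ∀ n, Real.sqrt (‖z n‖ ^ 2 + 1) ≤
      Real.sqrt 2 * max (‖z n‖) 1 := by
    intro n
    rw [show Real.sqrt 2 * max (‖z n‖) 1
        = Real.sqrt (2 * (max (‖z n‖) 1) ^ 2) by
      rw [Real.sqrt_mul (by norm_num), Real.sqrt_sq (hmax n)]]
    apply Real.sqrt_le_sqrt
    rcases le_total (‖z n‖) 1 with h | h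
    · rw [max_eq_right h]; nlinarith [norm_nonneg (z n)]
    · rw [max_eq_left h]; nlinarith [norm_nonneg (z n)]
  -- limits of the bounding sequences
  have hmaxlim : Tendsto (fun n => max (‖z n‖) 1 ^ ε n) ω (nhds (max Lz 1)) := by
    have : (fun n => max (‖z n‖) 1 ^ ε n)
        = fun n => max (‖z n‖ ^ ε n) 1 := by
      funext n; exact max_rpow_one (norm_nonneg _) (hεnn n)
    rw [this]
    simpa using hLz.max tendsto_const_nhds
  have h2 : Tendsto (fun n => Real.sqrt 2 ^ ε n) ω (nhds 1) := by
    have := (tendsto_const_nhds (x := Real.sqrt 2) (f := (ω : Filter ℕ))).rpow h0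
      (Or.inl (by positivity))
    simpa using this
  have hupperlim : Tendsto (fun n => (Real.sqrt 2 * max (‖z n‖) 1) ^ ε n) ω
      (nhds (max Lz 1)) := by
    have heq : ∀ n, (Real.sqrt 2 * max (‖z n‖) 1) ^ ε n
        = Real.sqrt 2 ^ ε n * max (‖z n‖) 1 ^ ε n := by
      intro n; exact Real.mul_rpow (Real.sqrt_nonneg _) (hmax n)
    simp only [heq]
    simpa using h2.mul hmaxlim
  refine tendsto_of_tendsto_of_tendsto_of_le_of_le hmaxlim hupperlim ?_ ?_
  · intro n
    exact Real.rpow_le_rpow (hmax n) (hlow n) (hεnn n)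
  · intro n
    exact Real.rpow_le_rpow (Real.sqrt_nonneg _) (hhigh n) (hεnn n)

/-- For z, w ∈ A^ε and an ultrafilter ω with lim_ω ε_n = 0, the ε_n-th powers of the
spherical (chordal) distances converge along ω to the non-Archimedean projective
distance: with |z_ω| = lim_ω |z_n|^{ε_n}, |w_ω| = lim_ω |w_n|^{ε_n} and
|z_ω - w_ω| = lim_ω |z_n - w_n|^{ε_n}, one has
lim_ω (|z_n - w_n|/(√(|z_n|²+1)·√(|w_n|²+1)))^{ε_n}
  = |z_ω - w_ω| / (max(|z_ω|,1) · max(|w_ω|,1)). -/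
theorem stmt_19 (ε : ℕ → ℝ) (hε : ∀ n, ε n ∈ Set.Ioc (0 : ℝ) 1) (ω : Ultrafilter ℕ)
    (h0 : Tendsto ε ω (nhds 0))
    (z w : ℕ → ℂ)
    (hz : ∃ M : ℝ, ∀ n, ‖z n‖ ^ ε n ≤ M)
    (hw : ∃ M : ℝ, ∀ n, ‖w n‖ ^ ε n ≤ M)
    (Lz Lw Lzw : ℝ)
    (hLz : Tendsto (fun n => ‖z n‖ ^ ε n) ω (nhds Lz))
    (hLw : Tendsto (fun n => ‖w n‖ ^ ε n) ω (nhds Lw))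
    (hLzw : Tendsto (fun n => ‖z n - w n‖ ^ ε n) ω (nhds Lzw)) :
    Tendsto
      (fun n => (‖z n - w n‖ /
        (Real.sqrt (‖z n‖ ^ 2 + 1) *
          Real.sqrt (‖w n‖ ^ 2 + 1))) ^ ε n)
      ω (nhds (Lzw / (max Lz 1 * max Lw 1))) := by
  have hA := sqrt_aux ε hε ω h0 z Lz hLz
  have hB := sqrt_aux ε hε ω h0 w Lw hLw
  have hden : Tendsto (fun n => Real.sqrt (‖z n‖ ^ 2 + 1) ^ ε n *
      Real.sqrt (‖w n‖ ^ 2 + 1) ^ ε n) ω (nhds (max Lz 1 * max Lw 1)) :=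
    hA.mul hB
  have hne : max Lz 1 * max Lw 1 ≠ 0 := by positivity
  have := hLzw.div hden hne
  refine this.congr fun n => ?_
  simp only [Pi.div_apply]
  rw [Real.div_rpow (norm_nonneg _) (by positivity),
    Real.mul_rpow (Real.sqrt_nonneg _) (Real.sqrt_nonneg _)]
end
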